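/- arXiv:2110.08867 — 6 statements merged into one kernel-verified Lean document; each statement's English description precedes it below -/
import Mathlib

section
/- For every natural number n there exists a finite open cover U₀, U₁, …, U_{n+2} of the Sorgenfrey plane S × S such that every open shrinking V₀, V₁, …, V_{n+2} of this cover (V_i open in S × S, V_i ⊆ U_i for each i, and ⋃ V_i = S × S) has order at least n + 1, i.e., there exists a point of S × S belonging to at least n + 2 of the sets V_i. Consequently, the Čech covering dimension of the Sorgenfrey plane is infinite. -/
/-- The Sorgenfrey topology on `ℝ`: generated by the half-open intervals `[a, b)`. -/
def sorgenfreyLine : TopologicalSpace ℝ :=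
  TopologicalSpace.generateFrom {s : Set ℝ | ∃ a b : ℝ, s = Set.Ico a b}

/-- The Sorgenfrey plane topology on `ℝ × ℝ`: the product of two copies of the
Sorgenfrey topology. -/
def sorgenfreyPlane : TopologicalSpace (ℝ × ℝ) :=
  TopologicalSpace.induced Prod.fst sorgenfreyLine ⊓
    TopologicalSpace.induced Prod.snd sorgenfreyLine

/-- A Bernstein set: both `B` and its complement meet every uncountable closed
(in the Euclidean topology) subset of `ℝ`. -/
def IsBernstein (B : Set ℝ) : Prop :=
  ∀ C : Set ℝ, IsClosed C → ¬C.Countable → (B ∩ C).Nonempty ∧ (Bᶜ ∩ C).Nonempty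

namespace SPAux


open Set

/-- basic rectangle neighbourhood in the Sorgenfrey plane -/
def rect (p : ℝ × ℝ) (ε : ℝ) : Set (ℝ × ℝ) :=
  Set.Ico p.1 (p.1 + ε) ×ˢ Set.Ico p.2 (p.2 + ε)

lemma rect_mono {p : ℝ × ℝ} {ε ε' : ℝ} (h : ε ≤ ε') : rect p ε ⊆ rect p ε' := by
  rintro q ⟨⟨h1, h2⟩, h3, h4⟩
  exact ⟨⟨h1, by linarith⟩, h3, by linarith⟩

lemma mem_rect_self {p : ℝ × ℝ} {ε : ℝ} (h : 0 < ε) : p ∈ rect p ε :=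
  ⟨⟨le_refl _, by linarith⟩, le_refl _, by linarith⟩

lemma line_basis_of_open {W : Set ℝ} (h : sorgenfreyLine.IsOpen W) :
    ∀ x ∈ W, ∃ ε > 0, Set.Ico x (x + ε) ⊆ W := by
  have h' : TopologicalSpace.GenerateOpen {s : Set ℝ | ∃ a b : ℝ, s = Set.Ico a b} W := h
  clear h
  induction h' with
  | basic s hs =>
    obtain ⟨a, b, rfl⟩ := hs
    intro x hx
    refine ⟨b - x, by linarith [hx.2], fun y hy => ⟨le_trans hx.1 hy.1, by linarith [hy.2]⟩⟩
  | univ => exact fun x _ => ⟨1, one_pos, subset_univ _⟩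
  | inter s t _ _ ihs iht =>
    intro x hx
    obtain ⟨ε1, hε1, h1⟩ := ihs x hx.1
    obtain ⟨ε2, hε2, h2⟩ := iht x hx.2
    refine ⟨min ε1 ε2, lt_min hε1 hε2, fun y hy => ⟨?_, ?_⟩⟩
    · exact h1 ⟨hy.1, lt_of_lt_of_le hy.2 (by simp [min_le_left])⟩
    · exact h2 ⟨hy.1, lt_of_lt_of_le hy.2 (by simp [min_le_right])⟩
  | sUnion S _ ih =>
    rintro x ⟨s, hsS, hxs⟩
    obtain ⟨ε, hε, hsub⟩ := ih s hsS x hxs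
    exact ⟨ε, hε, hsub.trans (subset_sUnion_of_mem hsS)⟩

/-- the basis property for the plane -/
def planeBasisProp (S : Set (ℝ × ℝ)) : Prop := ∀ p ∈ S, ∃ ε > 0, rect p ε ⊆ S

def tP : TopologicalSpace (ℝ × ℝ) where
  IsOpen := planeBasisProp
  isOpen_univ := fun p _ => ⟨1, one_pos, subset_univ _⟩
  isOpen_inter := by
    intro s t hs ht p hp
    obtain ⟨ε1, hε1, h1⟩ := hs p hp.1
    obtain ⟨ε2, hε2, h2⟩ := ht p hp.2
    exact ⟨min ε1 ε2, lt_min hε1 hε2, fun q hq =>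
      ⟨h1 (rect_mono (min_le_left _ _) hq), h2 (rect_mono (min_le_right _ _) hq)⟩⟩
  isOpen_sUnion := by
    rintro S hS p ⟨s, hsS, hps⟩
    obtain ⟨ε, hε, h⟩ := hS s hsS p hps
    exact ⟨ε, hε, h.trans (subset_sUnion_of_mem hsS)⟩

lemma tP_le : tP ≤ sorgenfreyPlane := by
  refine le_inf ?_ ?_
  · rw [TopologicalSpace.le_def]
    intro s hs
    rw [@isOpen_induced_iff _ _ sorgenfreyLine] at hs
    obtain ⟨W, hW, rfl⟩ := hs
    intro p hp
    obtain ⟨ε, hε, hsub⟩ := line_basis_of_open hW p.1 hp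
    exact ⟨ε, hε, fun q hq => hsub hq.1⟩
  · rw [TopologicalSpace.le_def]
    intro s hs
    rw [@isOpen_induced_iff _ _ sorgenfreyLine] at hs
    obtain ⟨W, hW, rfl⟩ := hs
    intro p hp
    obtain ⟨ε, hε, hsub⟩ := line_basis_of_open hW p.2 hp
    exact ⟨ε, hε, fun q hq => hsub hq.2⟩

lemma plane_basis_of_open {S : Set (ℝ × ℝ)} (h : sorgenfreyPlane.IsOpen S) :
    planeBasisProp S :=
  IsOpen.mono (t₁ := tP) (t₂ := sorgenfreyPlane) h tP_le

lemma isOpen_rect (a b c d : ℝ) :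
    sorgenfreyPlane.IsOpen (Set.Ico a b ×ˢ Set.Ico c d) := by
  rw [Set.prod_eq]
  refine sorgenfreyPlane.isOpen_inter _ _ ?_ ?_
  · refine IsOpen.mono (t₂ := TopologicalSpace.induced Prod.fst sorgenfreyLine) ?_ inf_le_left
    rw [@isOpen_induced_iff _ _ sorgenfreyLine]
    exact ⟨Set.Ico a b, TopologicalSpace.GenerateOpen.basic _ ⟨a, b, rfl⟩, rfl⟩
  · refine IsOpen.mono (t₂ := TopologicalSpace.induced Prod.snd sorgenfreyLine) ?_ inf_le_right
    rw [@isOpen_induced_iff _ _ sorgenfreyLine]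
    exact ⟨Set.Ico c d, TopologicalSpace.GenerateOpen.basic _ ⟨c, d, rfl⟩, rfl⟩

lemma plane_open_of_basis {S : Set (ℝ × ℝ)} (h : planeBasisProp S) :
    sorgenfreyPlane.IsOpen S := by
  have hS : S = ⋃₀ {R : Set (ℝ × ℝ) | (∃ p ε, 0 < ε ∧ R = rect p ε) ∧ R ⊆ S} := by
    apply Subset.antisymm
    · intro p hp
      obtain ⟨ε, hε, hsub⟩ := h p hp
      exact ⟨rect p ε, ⟨⟨p, ε, hε, rfl⟩, hsub⟩, mem_rect_self hε⟩
    · exact sUnion_subset fun R hR => hR.2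
  rw [hS]
  refine sorgenfreyPlane.isOpen_sUnion _ ?_
  rintro R ⟨⟨p, ε, _, rfl⟩, -⟩
  exact isOpen_rect _ _ _ _



open Set

noncomputable section

/-- The countable dense subgroup `ℤ + ℤ√2` of `ℝ`. -/
def Gsub : AddSubgroup ℝ where
  carrier := {x | ∃ a b : ℤ, x = (a : ℝ) + (b : ℝ) * Real.sqrt 2}
  zero_mem' := ⟨0, 0, by simp⟩
  add_mem' := by
    rintro x y ⟨a, b, rfl⟩ ⟨c, d, rfl⟩
    exact ⟨a + c, b + d, by push_cast; ring⟩
  neg_mem' := by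
    rintro x ⟨a, b, rfl⟩
    exact ⟨-a, -b, by push_cast; ring⟩

/-- A choice of representatives for `ℝ / Gsub`. -/
def rep (x : ℝ) : ℝ := (QuotientAddGroup.mk (s := Gsub) x).out

lemma rep_spec (x : ℝ) : x - rep x ∈ Gsub := by
  have h : (QuotientAddGroup.mk (s := Gsub) (rep x)) = QuotientAddGroup.mk x :=
    Quotient.out_eq _
  rw [QuotientAddGroup.eq] at h
  rwa [neg_add_eq_sub] at h

lemma rep_add (x g : ℝ) (hg : g ∈ Gsub) : rep (x + g) = rep x := by
  unfold rep
  congr 1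
  rw [QuotientAddGroup.eq]
  have : -(x + g) + x = -g := by ring
  rw [this]
  exact Gsub.neg_mem hg

/-- The pieces of the partition of `ℝ`. -/
def Bset (m : ℕ) (i : ℕ) : Set ℝ :=
  {x | ∃ a b : ℤ, x - rep x = (((m : ℤ) * a + (i : ℤ) : ℤ) : ℝ) + (b : ℝ) * Real.sqrt 2}

lemma Bset_shift (m i j : ℕ) (x : ℝ) (a b : ℤ) (hx : x ∈ Bset m i) :
    x + ((((j : ℤ) - (i : ℤ) + (m : ℤ) * a : ℤ) : ℝ) + (b : ℝ) * Real.sqrt 2) ∈ Bset m j := by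
  obtain ⟨a₀, b₀, h⟩ := hx
  have hg : (((((j : ℤ) - (i : ℤ) + (m : ℤ) * a : ℤ) : ℝ) + (b : ℝ) * Real.sqrt 2)) ∈ Gsub :=
    ⟨_, b, rfl⟩
  refine ⟨a₀ + a, b₀ + b, ?_⟩
  rw [rep_add x _ hg]
  have h2 : x + ((((j : ℤ) - (i : ℤ) + (m : ℤ) * a : ℤ) : ℝ) + (b : ℝ) * Real.sqrt 2) - rep x
      = (x - rep x) + ((((j : ℤ) - (i : ℤ) + (m : ℤ) * a : ℤ) : ℝ) + (b : ℝ) * Real.sqrt 2) := by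
    ring
  rw [h2, h]
  push_cast
  ring

lemma Bset_cover (m : ℕ) (hm : 0 < m) (x : ℝ) : ∃ i < m, x ∈ Bset m i := by
  obtain ⟨a, b, h⟩ := rep_spec x
  have hm' : (0 : ℤ) < (m : ℤ) := by exact_mod_cast hm
  have h1 : 0 ≤ a % (m : ℤ) := Int.emod_nonneg a (by omega)
  have h2 : a % (m : ℤ) < (m : ℤ) := Int.emod_lt_of_pos a hm'
  refine ⟨(a % (m : ℤ)).toNat, by omega, a / (m : ℤ), b, ?_⟩
  rw [h]
  congr 1
  have ht : (((a % (m : ℤ)).toNat : ℤ)) = a % (m : ℤ) := Int.toNat_of_nonneg h1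
  rw [ht]
  exact_mod_cast (Int.mul_ediv_add_emod a (m : ℤ)).symm

lemma Bset_disjoint {m i j : ℕ} (hi : i < m) (hj : j < m) {x : ℝ}
    (hxi : x ∈ Bset m i) (hxj : x ∈ Bset m j) : i = j := by
  obtain ⟨a, b, ha⟩ := hxi
  obtain ⟨c, d, hc⟩ := hxj
  rw [ha] at hc
  by_cases hbd : b = d
  · subst hbd
    have : (((m : ℤ) * a + (i : ℤ) : ℤ) : ℝ) = (((m : ℤ) * c + (j : ℤ) : ℤ) : ℝ) := by
      linarith
    have h2 : ((m : ℤ) * a + (i : ℤ) : ℤ) = ((m : ℤ) * c + (j : ℤ) : ℤ) := by exact_mod_cast this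
    have hdvd : (m : ℤ) ∣ (i : ℤ) - (j : ℤ) := ⟨c - a, by linarith [h2]⟩
    have habs : |(i : ℤ) - (j : ℤ)| < (m : ℤ) := by rw [abs_lt]; omega
    have hz := Int.eq_zero_of_abs_lt_dvd hdvd habs
    omega
  · exfalso
    have hbd' : ((b : ℝ) - (d : ℝ)) ≠ 0 := by
      intro h0
      apply hbd
      exact_mod_cast sub_eq_zero.mp h0
    have hsq : Real.sqrt 2 =
        ((((m : ℤ) * c + (j : ℤ) : ℤ) : ℝ) - (((m : ℤ) * a + (i : ℤ) : ℤ) : ℝ)) / ((b : ℝ) - (d : ℝ)) := by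
      push_cast at hc
      field_simp
      push_cast
      linarith
    apply irrational_sqrt_two
    refine ⟨((((m : ℤ) * c + (j : ℤ)) - ((m : ℤ) * a + (i : ℤ)) : ℤ) : ℚ) / ((b : ℚ) - (d : ℚ)), ?_⟩
    rw [hsq]
    push_cast
    ring

/-- The subgroup `mℤ + ℤ√2` of `ℝ`. -/
def Hsub (m : ℕ) : AddSubgroup ℝ where
  carrier := {x | ∃ a b : ℤ, x = (m : ℝ) * (a : ℝ) + (b : ℝ) * Real.sqrt 2}
  zero_mem' := ⟨0, 0, by simp⟩
  add_mem' := by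
    rintro x y ⟨a, b, rfl⟩ ⟨c, d, rfl⟩
    exact ⟨a + c, b + d, by push_cast; ring⟩
  neg_mem' := by
    rintro x ⟨a, b, rfl⟩
    exact ⟨-a, -b, by push_cast; ring⟩

lemma Hsub_countable (m : ℕ) : ((Hsub m : Set ℝ)).Countable := by
  have hsub : (Hsub m : Set ℝ) ⊆
      Set.range (fun p : ℤ × ℤ => (m : ℝ) * (p.1 : ℝ) + (p.2 : ℝ) * Real.sqrt 2) := by
    rintro x ⟨a, b, rfl⟩
    exact ⟨(a, b), rfl⟩
  exact (Set.countable_range _).mono hsub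

lemma Hsub_dense (m : ℕ) (hm : 0 < m) : Dense (Hsub m : Set ℝ) := by
  rcases AddSubgroup.dense_or_cyclic (Hsub m) with h | ⟨a, ha⟩
  · exact h
  · exfalso
    have hmem : ((m : ℝ)) ∈ Hsub m := ⟨1, 0, by simp⟩
    have hsq : Real.sqrt 2 ∈ Hsub m := ⟨0, 1, by simp⟩
    rw [ha, AddSubgroup.mem_closure_singleton] at hmem hsq
    obtain ⟨z, hz⟩ := hmem
    obtain ⟨w, hw⟩ := hsq
    rw [zsmul_eq_mul] at hz hw
    have hmr : (0 : ℝ) < (m : ℝ) := by exact_mod_cast hm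
    have hz0 : z ≠ 0 := by
      rintro rfl
      rw [Int.cast_zero, zero_mul] at hz
      linarith
    have ha0 : (z : ℝ) ≠ 0 := Int.cast_ne_zero.mpr hz0
    apply irrational_sqrt_two
    refine ⟨((w : ℚ) * (m : ℚ)) / (z : ℚ), ?_⟩
    have hval : a = (m : ℝ) / (z : ℝ) := by
      rw [eq_div_iff ha0]; linarith [hz]
    rw [← hw, hval]
    push_cast
    ring

end



open Set

lemma isMeagre_iUnion' {ι : Type*} [Countable ι] {s : ι → Set ℝ}
    (h : ∀ i, IsMeagre (s i)) : IsMeagre (⋃ i, s i) := by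
  rw [IsMeagre, compl_iUnion]
  exact countable_iInter_mem.mpr h

lemma nwd_isMeagre' {s : Set ℝ} (h : IsNowhereDense s) : IsMeagre s := by
  rw [isMeagre_iff_countable_union_isNowhereDense]
  exact ⟨{s}, by simpa using h, countable_singleton s, subset_sUnion_of_mem rfl⟩

lemma isMeagre_translate {s : Set ℝ} (c : ℝ) (h : IsMeagre s) :
    IsMeagre ((fun y => y + c) '' s) := by
  rw [isMeagre_iff_countable_union_isNowhereDense] at h ⊢
  obtain ⟨S, hnwd, hcnt, hsub⟩ := h
  refine ⟨(fun t => (fun y => y + c) '' t) '' S, ?_, hcnt.image _, ?_⟩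
  · rintro t ⟨u, hu, rfl⟩
    show interior (closure (⇑(Homeomorph.addRight c) '' u)) = ∅
    rw [← (Homeomorph.addRight c).image_closure, ← (Homeomorph.addRight c).image_interior,
      hnwd u hu, image_empty]
  · rintro y ⟨x, hx, rfl⟩
    obtain ⟨t, ht, hxt⟩ := hsub hx
    exact mem_sUnion.2 ⟨(fun y => y + c) '' t, ⟨t, ht, rfl⟩, ⟨x, hxt, rfl⟩⟩

lemma univ_not_meagre : ¬ IsMeagre (univ : Set ℝ) := by
  intro h
  rw [IsMeagre, compl_univ] at h
  have hd := dense_of_mem_residual h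
  simpa using hd.nonempty


end SPAux

/-- For every `n` there is a finite open cover `U₀, …, U_{n+2}` of the Sorgenfrey plane
such that every open shrinking of it has order at least `n + 1`: some point lies in at
least `n + 2` of the sets of the shrinking. Hence the Čech covering dimension of the
Sorgenfrey plane is infinite. -/
theorem sorgenfrey_plane_cover_without_small_shrinking (n : ℕ) :
    ∃ U : Fin (n + 3) → Set (ℝ × ℝ),
      (∀ i, sorgenfreyPlane.IsOpen (U i)) ∧
      (⋃ i, U i) = Set.univ ∧
      ∀ V : Fin (n + 3) → Set (ℝ × ℝ),
        (∀ i, sorgenfreyPlane.IsOpen (V i)) →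
        (∀ i, V i ⊆ U i) →
        (⋃ i, V i) = Set.univ →
        ∃ p : ℝ × ℝ, ∃ I : Finset (Fin (n + 3)),
          n + 2 ≤ I.card ∧ ∀ i ∈ I, p ∈ V i := by
  classical
  set m := n + 3 with hm
  have hm0 : 0 < m := by omega
  refine ⟨fun i => {p : ℝ × ℝ | p.1 + p.2 = 0 → p.1 ∈ SPAux.Bset m i.val}, ?_, ?_, ?_⟩
  · -- openness of the cover
    intro i
    apply SPAux.plane_open_of_basis
    intro p hp
    rcases lt_trichotomy (p.1 + p.2) 0 with hlt | heq | hgt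
    · refine ⟨-(p.1 + p.2)/2, by linarith, ?_⟩
      rintro q ⟨⟨hq1, hq2⟩, hq3, hq4⟩ h0
      exfalso; linarith
    · refine ⟨1, one_pos, ?_⟩
      rintro q ⟨⟨hq1, hq2⟩, hq3, hq4⟩ h0
      have hq1' : q.1 = p.1 := by linarith
      rw [hq1']; exact hp heq
    · refine ⟨1, one_pos, ?_⟩
      rintro q ⟨⟨hq1, hq2⟩, hq3, hq4⟩ h0
      exfalso; linarith
  · -- it is a cover
    ext p
    simp only [Set.mem_iUnion, Set.mem_univ, iff_true, Set.mem_setOf_eq]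
    by_cases h0 : p.1 + p.2 = 0
    · obtain ⟨i, hi, hmem⟩ := SPAux.Bset_cover m hm0 p.1
      exact ⟨⟨i, hi⟩, fun _ => hmem⟩
    · exact ⟨⟨0, by omega⟩, fun h => absurd h h0⟩
  · -- every shrinking has a point of high order
    intro V hVopen hVsub hVcover
    have hpt : ∀ (i : Fin m) (x : ℝ), x ∈ SPAux.Bset m i.val → (x, -x) ∈ V i := by
      intro i x hx
      have hmem : ((x, -x) : ℝ × ℝ) ∈ ⋃ j, V j := by rw [hVcover]; exact Set.mem_univ _
      obtain ⟨j, hj⟩ := Set.mem_iUnion.mp hmem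
      have hU := hVsub j hj
      have h0 : ((x, -x) : ℝ × ℝ).1 + ((x, -x) : ℝ × ℝ).2 = 0 := by simp
      have hxj : x ∈ SPAux.Bset m j.val := hU h0
      have hij : i = j := Fin.ext (SPAux.Bset_disjoint i.isLt j.isLt hx hxj)
      rwa [hij]
    set A : Fin m → ℕ → Set ℝ :=
      fun i k => {x : ℝ | SPAux.rect (x, -x) (1 / ((k : ℝ) + 1)) ⊆ V i} with hA
    have hBA : ∀ i : Fin m, SPAux.Bset m i.val ⊆ ⋃ k, A i k := by
      intro i x hx
      have hmem := hpt i x hx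
      obtain ⟨ε, hε, hrect⟩ := SPAux.plane_basis_of_open (hVopen i) _ hmem
      obtain ⟨k, hk⟩ := exists_nat_one_div_lt hε
      exact Set.mem_iUnion.mpr ⟨k, fun q hq => hrect (SPAux.rect_mono (le_of_lt hk) hq)⟩
    set W : Fin m → Set ℝ := fun i => ⋃ k, interior (closure (A i k)) with hW
    have hWopen : ∀ i, IsOpen (W i) := fun i => isOpen_iUnion fun k => isOpen_interior
    have hWdense : ∀ i, Dense (W i) := by
      intro i
      rw [dense_iff_inter_open]
      rintro O hO ⟨z, hz⟩
      obtain ⟨δ, hδ, hball⟩ := Metric.isOpen_iff.mp hO z hz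
      rw [Real.ball_eq_Ioo] at hball
      set u := z - δ with hu
      set v := z + δ with hv
      have huv : u < v := by rw [hu, hv]; linarith
      by_contra hempty
      rw [Set.not_nonempty_iff_eq_empty] at hempty
      have hnwd : ∀ k, IsNowhereDense (A i k ∩ Set.Ioo u v) := by
        intro k
        have h1 : closure (A i k ∩ Set.Ioo u v) ⊆ closure (A i k) ∩ Set.Icc u v := by
          refine subset_trans (closure_inter_subset_inter_closure _ _) ?_
          rw [closure_Ioo (ne_of_lt huv)]
        have h2 : interior (closure (A i k ∩ Set.Ioo u v)) ⊆
            interior (closure (A i k)) ∩ Set.Ioo u v := by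
          refine subset_trans (interior_mono h1) ?_
          rw [interior_inter, interior_Icc]
        have h3 : interior (closure (A i k)) ∩ Set.Ioo u v ⊆ O ∩ W i := fun y hy =>
          ⟨hball hy.2, Set.mem_iUnion.mpr ⟨k, hy.1⟩⟩
        rw [IsNowhereDense, ← Set.subset_empty_iff]
        exact ((h2.trans h3).trans (le_of_eq hempty))
      have hmeag1 : IsMeagre (SPAux.Bset m i.val ∩ Set.Ioo u v) := by
        have hsub : SPAux.Bset m i.val ∩ Set.Ioo u v ⊆ ⋃ k, (A i k ∩ Set.Ioo u v) := by
          rintro x ⟨hx1, hx2⟩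
          obtain ⟨k, hk⟩ := Set.mem_iUnion.mp (hBA i hx1)
          exact Set.mem_iUnion.mpr ⟨k, hk, hx2⟩
        exact (SPAux.isMeagre_iUnion' (fun k => SPAux.nwd_isMeagre' (hnwd k))).mono hsub
      haveI : Countable (SPAux.Hsub m : Set ℝ) := (SPAux.Hsub_countable m).to_subtype
      have hcov : SPAux.Bset m i.val ⊆
          ⋃ g : (SPAux.Hsub m : Set ℝ),
            ((fun y => y + (g : ℝ)) '' (SPAux.Bset m i.val ∩ Set.Ioo u v)) := by
        intro x hx
        obtain ⟨g, hgH, hgI⟩ : ∃ g ∈ (SPAux.Hsub m : Set ℝ), g ∈ Set.Ioo (x - v) (x - u) := by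
          have hd := SPAux.Hsub_dense m hm0
          rw [dense_iff_inter_open] at hd
          obtain ⟨g, hg1, hg2⟩ := hd (Set.Ioo (x - v) (x - u)) isOpen_Ioo
            (Set.nonempty_Ioo.mpr (by linarith))
          exact ⟨g, hg2, hg1⟩
        obtain ⟨a, b, hab⟩ := id hgH
        have hxg : x - g ∈ SPAux.Bset m i.val := by
          have hshift := SPAux.Bset_shift m i.val i.val x (-a) (-b) hx
          have harr : x + ((((i.val : ℤ) - (i.val : ℤ) + (m : ℤ) * (-a) : ℤ) : ℝ)
              + ((-b : ℤ) : ℝ) * Real.sqrt 2) = x - g := by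
            rw [hab]; push_cast; ring
          rwa [harr] at hshift
        refine Set.mem_iUnion.mpr ⟨⟨g, hgH⟩, ?_⟩
        exact ⟨x - g, ⟨hxg, ⟨by linarith [hgI.2], by linarith [hgI.1]⟩⟩, by ring⟩
      have hmeagB : IsMeagre (SPAux.Bset m i.val) :=
        (SPAux.isMeagre_iUnion' (fun g => SPAux.isMeagre_translate _ hmeag1)).mono hcov
      have hmeagAll : ∀ j : Fin m, IsMeagre (SPAux.Bset m j.val) := by
        intro j
        have himg : SPAux.Bset m j.val ⊆
            (fun y => y + (((j.val : ℤ) - (i.val : ℤ) : ℤ) : ℝ)) '' SPAux.Bset m i.val := by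
          intro z hz
          refine ⟨z - (((j.val : ℤ) - (i.val : ℤ) : ℤ) : ℝ), ?_, by push_cast; ring⟩
          have hshift := SPAux.Bset_shift m j.val i.val z 0 0 hz
          have harr : z + ((((i.val : ℤ) - (j.val : ℤ) + (m : ℤ) * 0 : ℤ) : ℝ)
              + ((0 : ℤ) : ℝ) * Real.sqrt 2) = z - (((j.val : ℤ) - (i.val : ℤ) : ℤ) : ℝ) := by
            push_cast; ring
          rwa [harr] at hshift
        exact (SPAux.isMeagre_translate _ hmeagB).mono himg
      apply SPAux.univ_not_meagre
      have huniv : (Set.univ : Set ℝ) ⊆ ⋃ j : Fin m, SPAux.Bset m j.val := by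
        intro z _
        obtain ⟨i0, hi0, hmem⟩ := SPAux.Bset_cover m hm0 z
        exact Set.mem_iUnion.mpr ⟨⟨i0, hi0⟩, hmem⟩
      exact (SPAux.isMeagre_iUnion' hmeagAll).mono huniv
    have hdense : Dense (⋂ i, W i) := dense_iInter_of_isOpen hWopen hWdense
    obtain ⟨x, hx⟩ := hdense.nonempty
    have hx' : ∀ i, x ∈ W i := fun i => Set.mem_iInter.mp hx i
    have hk' : ∀ i : Fin m, ∃ k : ℕ, x ∈ interior (closure (A i k)) :=
      fun i => Set.mem_iUnion.mp (hx' i)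
    choose k hk using hk'
    have hγ' : ∀ i : Fin m, ∃ γ, 0 < γ ∧ Set.Ioo (x - γ) (x + γ) ⊆ closure (A i (k i)) := by
      intro i
      have hnb := mem_interior_iff_mem_nhds.mp (hk i)
      obtain ⟨γ, hγ0, hγ⟩ := Metric.mem_nhds_iff.mp hnb
      rw [Real.ball_eq_Ioo] at hγ
      exact ⟨γ, hγ0, hγ⟩
    choose γ hγ0 hγ using hγ'
    have hne : (Finset.univ : Finset (Fin m)).Nonempty := ⟨⟨0, by omega⟩, Finset.mem_univ _⟩
    set t : ℝ := Finset.univ.inf' hne (fun i => min (γ i) (1 / (2 * ((k i : ℝ) + 1)))) with htdef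
    have ht0 : 0 < t := by
      rw [htdef, Finset.lt_inf'_iff]
      intro i _
      exact lt_min (hγ0 i) (by positivity)
    have htγ : ∀ i, t ≤ γ i :=
      fun i => le_trans (Finset.inf'_le _ (Finset.mem_univ i)) (min_le_left _ _)
    have htk : ∀ i, t ≤ 1 / (2 * ((k i : ℝ) + 1)) :=
      fun i => le_trans (Finset.inf'_le _ (Finset.mem_univ i)) (min_le_right _ _)
    have hy' : ∀ i : Fin m, ∃ y, y ∈ A i (k i) ∧ y ∈ Set.Ioo (x - t) x := by
      intro i
      have hsub : Set.Ioo (x - t) x ⊆ closure (A i (k i)) := by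
        intro w hw
        exact hγ i ⟨by linarith [hw.1, htγ i], by linarith [hw.2, hγ0 i]⟩
      have hz : x - t/2 ∈ closure (A i (k i)) := hsub ⟨by linarith, by linarith⟩
      obtain ⟨y, hy1, hy2⟩ :=
        mem_closure_iff.mp hz (Set.Ioo (x - t) x) isOpen_Ioo ⟨by linarith, by linarith⟩
      exact ⟨y, hy2, hy1⟩
    choose y hyA hyI using hy'
    refine ⟨(x, -x + t), Finset.univ, ?_, ?_⟩
    · rw [Finset.card_univ, Fintype.card_fin]; omega
    · intro i _
      have hc : (0 : ℝ) < (k i : ℝ) + 1 := by positivity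
      have he0 : (0 : ℝ) < 1 / ((k i : ℝ) + 1) := by positivity
      have h1 : t * (2 * ((k i : ℝ) + 1)) ≤ 1 := (le_div_iff₀ (by positivity)).mp (htk i)
      have ht2 : 2 * t ≤ 1 / ((k i : ℝ) + 1) := by
        rw [le_div_iff₀ hc]; nlinarith [h1]
      have hy1 := (hyI i).1
      have hy2 := (hyI i).2
      have hmem : ((x, -x + t) : ℝ × ℝ) ∈ SPAux.rect (y i, -(y i)) (1 / ((k i : ℝ) + 1)) := by
        simp only [SPAux.rect, Set.mem_prod, Set.mem_Ico]
        refine ⟨⟨?_, ?_⟩, ?_, ?_⟩ <;> linarith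
      exact hyA i hmem
end

section
/- For every natural number n there exists a finite open cover 𝓤 of the Sorgenfrey plane S × S admitting no finite open refinement of order at most n: for every finite family 𝓥 of open subsets of S × S that covers S × S and is such that each member of 𝓥 is contained in some member of 𝓤, there exists a point of S × S belonging to at least n + 2 members of 𝓥. In particular, the Čech covering dimension of the Sorgenfrey plane is infinite. -/
open Set TopologicalSpace

lemma plane_eq : sorgenfreyPlane = generateFrom
    ((Prod.fst ⁻¹' ·) '' {s : Set ℝ | ∃ a b : ℝ, s = Set.Ico a b} ∪
     (Prod.snd ⁻¹' ·) '' {s : Set ℝ | ∃ a b : ℝ, s = Set.Ico a b}) := by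
  rw [generateFrom_union, sorgenfreyPlane, sorgenfreyLine, induced_generateFrom_eq,
    induced_generateFrom_eq]

/-- basic boxes are Sorgenfrey-plane open -/
lemma box_open (a b c d : ℝ) : sorgenfreyPlane.IsOpen ((Ico a b ×ˢ Ico c d)) := by
  rw [plane_eq]
  have h1 : GenerateOpen ((Prod.fst ⁻¹' ·) '' {s : Set ℝ | ∃ a b : ℝ, s = Set.Ico a b} ∪
     (Prod.snd ⁻¹' ·) '' {s : Set ℝ | ∃ a b : ℝ, s = Set.Ico a b})
     ((Prod.fst : ℝ × ℝ → ℝ) ⁻¹' Ico a b) :=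
    .basic _ (Or.inl ⟨Ico a b, ⟨a, b, rfl⟩, rfl⟩)
  have h2 : GenerateOpen ((Prod.fst ⁻¹' ·) '' {s : Set ℝ | ∃ a b : ℝ, s = Set.Ico a b} ∪
     (Prod.snd ⁻¹' ·) '' {s : Set ℝ | ∃ a b : ℝ, s = Set.Ico a b})
     ((Prod.snd : ℝ × ℝ → ℝ) ⁻¹' Ico c d) :=
    .basic _ (Or.inr ⟨Ico c d, ⟨c, d, rfl⟩, rfl⟩)
  have : Ico a b ×ˢ Ico c d = (Prod.fst : ℝ × ℝ → ℝ) ⁻¹' Ico a b ∩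
      (Prod.snd : ℝ × ℝ → ℝ) ⁻¹' Ico c d := rfl
  rw [this]
  exact GenerateOpen.inter _ _ h1 h2

/-- every Sorgenfrey-plane open set contains a box around each of its points -/
lemma exists_box {W : Set (ℝ × ℝ)} (hW : sorgenfreyPlane.IsOpen W) {p : ℝ × ℝ} (hp : p ∈ W) :
    ∃ δ > 0, Ico p.1 (p.1 + δ) ×ˢ Ico p.2 (p.2 + δ) ⊆ W := by
  rw [plane_eq] at hW
  induction hW with
  | basic s hs =>
    rcases hs with ⟨t, ⟨a, b, rfl⟩, rfl⟩ | ⟨t, ⟨a, b, rfl⟩, rfl⟩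
    · refine ⟨b - p.1, by simpa using hp.2, ?_⟩
      rintro ⟨x, y⟩ ⟨⟨h1, h2⟩, -⟩
      exact ⟨le_trans hp.1 h1, by linarith⟩
    · refine ⟨b - p.2, by simpa using hp.2, ?_⟩
      rintro ⟨x, y⟩ ⟨-, h1, h2⟩
      exact ⟨le_trans hp.1 h1, by linarith⟩
  | univ => exact ⟨1, one_pos, fun _ _ => trivial⟩
  | inter s t _ _ ihs iht =>
    obtain ⟨δ₁, hδ₁, h₁⟩ := ihs hp.1
    obtain ⟨δ₂, hδ₂, h₂⟩ := iht hp.2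
    refine ⟨min δ₁ δ₂, lt_min hδ₁ hδ₂, fun q hq => ⟨h₁ ?_, h₂ ?_⟩⟩
    · exact ⟨⟨hq.1.1, lt_of_lt_of_le hq.1.2 (by simp [min_le_left])⟩,
        ⟨hq.2.1, lt_of_lt_of_le hq.2.2 (by simp [min_le_left])⟩⟩
    · exact ⟨⟨hq.1.1, lt_of_lt_of_le hq.1.2 (by simp [min_le_right])⟩,
        ⟨hq.2.1, lt_of_lt_of_le hq.2.2 (by simp [min_le_right])⟩⟩
  | sUnion S _ ih =>
    obtain ⟨s, hsS, hps⟩ := hp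
    obtain ⟨δ, hδ, h⟩ := ih s hsS hps
    exact ⟨δ, hδ, h.trans (subset_sUnion_of_mem hsS)⟩

/-- a set all whose points have a box neighborhood inside it is open -/
lemma open_of_boxes {W : Set (ℝ × ℝ)}
    (h : ∀ p ∈ W, ∃ δ > 0, Ico p.1 (p.1 + δ) ×ˢ Ico p.2 (p.2 + δ) ⊆ W) :
    sorgenfreyPlane.IsOpen (W) := by
  choose! δ hδ hsub using h
  have : W = ⋃ p ∈ W, Ico p.1 (p.1 + δ p) ×ˢ Ico p.2 (p.2 + δ p) := by
    apply Subset.antisymm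
    · intro p hp
      exact mem_biUnion hp ⟨⟨le_refl _, by linarith [hδ p hp]⟩, ⟨le_refl _, by linarith [hδ p hp]⟩⟩
    · exact iUnion₂_subset fun p hp => hsub p hp
  have h2 : W = ⋃₀ ((fun p : ℝ × ℝ => Ico p.1 (p.1 + δ p) ×ˢ Ico p.2 (p.2 + δ p)) '' W) := by
    rw [sUnion_image]; exact this
  rw [h2]
  exact sorgenfreyPlane.isOpen_sUnion _ (by rintro t ⟨p, -, rfl⟩; exact box_open _ _ _ _)

lemma exists_coloring : ∃ g : ℝ →ₗ[ℚ] ℚ, ∀ (q : ℚ) (U : Set ℝ), IsOpen U → U.Nonempty →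
    ¬ IsMeagre (g ⁻¹' {q} ∩ U) := by
  classical
  set b := Module.Basis.ofVectorSpace ℚ ℝ with hb
  obtain ⟨i⟩ := b.index_nonempty
  set f : ℝ →ₗ[ℚ] ℚ := b.coord i with hf
  have hfe : f (b i) = 1 := by simp [hf, Module.Basis.coord_apply]
  have hc : ∀ q : ℚ, f ((q : ℚ) • (b i : ℝ)) = q := by
    intro q; rw [map_smul, hfe]; simp
  -- a nonzero kernel element
  have hker : ∃ x₀ : ℝ, x₀ ≠ 0 ∧ f x₀ = 0 := by
    by_contra h
    push_neg at h
    have hinj : Function.Injective f := by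
      intro x y hxy
      by_contra hne
      exact h (x - y) (sub_ne_zero.mpr hne) (by rw [map_sub, hxy, sub_self])
    have : Countable ℝ := hinj.countable
    exact Cardinal.not_countable_real Set.countable_univ
  obtain ⟨x₀, hx0, hfx0⟩ := hker
  -- dense fibers
  have hdense : ∀ q : ℚ, Dense {x : ℝ | f x = q} := by
    intro q
    have hdr : DenseRange (fun r : ℚ => (q:ℚ) • (b i : ℝ) + x₀ * (r : ℝ)) := by
      let h : ℝ ≃ₜ ℝ := (Homeomorph.mulLeft₀ x₀ hx0).trans (Homeomorph.addLeft ((q:ℚ) • (b i : ℝ)))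
      have h2 := (h.surjective.denseRange).comp Rat.denseRange_cast h.continuous
      exact h2
    refine Dense.mono ?_ hdr
    rintro x ⟨r, rfl⟩
    have : x₀ * (r : ℝ) = (r : ℚ) • x₀ := by rw [Rat.smul_def, mul_comm]
    simp only [mem_setOf_eq, map_add, hc, this, map_smul, hfx0, smul_zero, add_zero]
  refine ⟨f, fun q U hU hne hmeag => ?_⟩
  -- every fiber is then meagre
  have key : ∀ q' : ℚ, IsMeagre (f ⁻¹' {q'}) := by
    intro q'
    set 𝒮 : Set (Set ℝ) := (fun t => (fun x => t + x) '' U) '' {x | f x = q' - q} with h𝒮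
    have hop : ∀ W ∈ 𝒮, IsOpen W := by
      rintro W ⟨t, -, rfl⟩
      exact (isOpenMap_add_left t) U hU
    obtain ⟨T, hTc, hT𝒮, hTU⟩ := TopologicalSpace.isOpen_sUnion_countable 𝒮 hop
    have hcover : ⋃₀ 𝒮 = univ := by
      apply eq_univ_of_forall
      intro x
      have hop2 : IsOpen ((fun u => x - u) '' U) := by
        have hcomp : (fun u : ℝ => x - u) '' U = (fun y => x + y) '' ((fun u : ℝ => -u) '' U) := by
          rw [← image_comp]
          ext y
          simp [sub_eq_add_neg, Function.comp]
        rw [hcomp]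
        exact (isOpenMap_add_left x) _ ((Homeomorph.neg ℝ).isOpenMap _ hU)
      have hne2 : ((fun u => x - u) '' U).Nonempty := hne.image _
      obtain ⟨t, ht1, ht2⟩ := (hdense (q' - q)).exists_mem_open hop2 hne2
      obtain ⟨u, hu, rfl⟩ := ht2
      exact ⟨(fun y => (x - u) + y) '' U, ⟨x - u, ht1, rfl⟩, ⟨u, hu, by ring⟩⟩
    rw [hcover] at hTU
    have hTne : T.Nonempty := by
      rcases T.eq_empty_or_nonempty with h | h
      · subst h
        rw [sUnion_empty] at hTU
        exact absurd hTU empty_ne_univ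
      · exact h
    obtain ⟨e, rfl⟩ := Set.Countable.exists_eq_range hTc hTne
    have hXsub : f ⁻¹' {q'} ⊆ ⋃ n, (f ⁻¹' {q'} ∩ e n) := by
      intro x hx
      have : x ∈ ⋃₀ range e := by rw [hTU]; trivial
      obtain ⟨W, ⟨m, rfl⟩, hxW⟩ := this
      exact mem_iUnion.mpr ⟨m, hx, hxW⟩
    refine IsMeagre.mono hXsub (isMeagre_iUnion fun m => ?_)
    obtain ⟨t, htf, htW⟩ := hT𝒮 ⟨m, rfl⟩
    have heq : f ⁻¹' {q'} ∩ e m = (fun x => x - t) ⁻¹' (f ⁻¹' {q} ∩ U) := by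
      rw [← htW]
      ext x
      simp only [mem_inter_iff, mem_preimage, mem_singleton_iff, mem_image]
      constructor
      · rintro ⟨hq', u, hu, rfl⟩
        refine ⟨by rw [map_sub, hq', htf]; ring, by simpa using hu⟩
      · rintro ⟨h1, h2⟩
        refine ⟨?_, x - t, h2, by ring⟩
        have h4 := map_sub f x t
        rw [h1] at h4
        have h5 : f t = q' - q := htf
        linarith [h4.symm]
    rw [heq]
    have hom : IsOpenMap (fun x : ℝ => x - t) := by
      simpa [sub_eq_add_neg] using isOpenMap_add_right (-t)
    exact hmeag.preimage_of_isOpenMap (continuous_sub_right t) hom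
  -- conclude
  obtain ⟨en, hen⟩ := exists_surjective_nat ℚ
  have hu : IsMeagre (univ : Set ℝ) := by
    have hcov : (univ : Set ℝ) ⊆ ⋃ n, f ⁻¹' {en n} := by
      intro x _
      obtain ⟨n, hn⟩ := hen (f x)
      exact mem_iUnion.mpr ⟨n, by simp [hn]⟩
    exact IsMeagre.mono hcov (isMeagre_iUnion fun n => key (en n))
  have hd : Dense (∅ : Set ℝ) := by
    have h6 := dense_of_mem_residual (by rwa [IsMeagre, compl_univ] at hu)
    simpa using h6
  simpa using hd.nonempty

lemma nonmeagre_dense_open {A : Set ℝ} (h : ¬ IsMeagre A) :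
    ∃ G : Set ℝ, IsOpen G ∧ G.Nonempty ∧ G ⊆ closure A := by
  refine ⟨interior (closure A), isOpen_interior, ?_, interior_subset⟩
  rw [nonempty_iff_ne_empty]
  intro hempty
  exact h (isMeagre_iff_countable_union_isNowhereDense.mpr
    ⟨{A}, by rintro t rfl; exact hempty, countable_singleton A, by simp⟩)

lemma rec_dense (A : ℕ → ℕ → Set ℝ)
    (hcov : ∀ i (U : Set ℝ), IsOpen U → U.Nonempty → ∃ k, ¬ IsMeagre (A i k ∩ U)) (m : ℕ) :
    ∃ G : Set ℝ, IsOpen G ∧ G.Nonempty ∧ ∃ κ : ℕ → ℕ, ∀ i < m, G ⊆ closure (A i (κ i)) := by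
  induction m with
  | zero => exact ⟨univ, isOpen_univ, univ_nonempty, fun _ => 0,
      fun i hi => absurd hi (Nat.not_lt_zero i)⟩
  | succ m ih =>
    obtain ⟨G, hGo, hGne, κ, hκ⟩ := ih
    obtain ⟨k, hk⟩ := hcov m G hGo hGne
    obtain ⟨G', hG'o, hG'ne, hG'sub⟩ := nonmeagre_dense_open hk
    refine ⟨G', hG'o, hG'ne, Function.update κ m k, fun i hi => ?_⟩
    rcases Nat.lt_succ_iff_lt_or_eq.mp hi with hi | rfl
    · rw [Function.update_of_ne (Nat.ne_of_lt hi)]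
      calc G' ⊆ closure (A m k ∩ G) := hG'sub
        _ ⊆ closure G := closure_mono inter_subset_right
        _ ⊆ closure (closure (A i (κ i))) := closure_mono (hκ i hi)
        _ = closure (A i (κ i)) := closure_closure
    · rw [Function.update_self]
      exact hG'sub.trans (closure_mono inter_subset_left)

/-- For every `n` there is a finite open cover `𝓤` of the Sorgenfrey plane with no finite
open refinement of order at most `n`: every finite open cover `𝓥` refining `𝓤` has a
point lying in at least `n + 2` of its members. Hence the Čech covering dimension of the
Sorgenfrey plane is infinite. -/
theorem sorgenfrey_plane_cover_without_small_refinement (n : ℕ) :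
    ∃ 𝓤 : Finset (Set (ℝ × ℝ)),
      (∀ u ∈ 𝓤, sorgenfreyPlane.IsOpen u) ∧
      ⋃₀ (𝓤 : Set (Set (ℝ × ℝ))) = Set.univ ∧
      ∀ 𝓥 : Finset (Set (ℝ × ℝ)),
        (∀ v ∈ 𝓥, sorgenfreyPlane.IsOpen v) →
        ⋃₀ (𝓥 : Set (Set (ℝ × ℝ))) = Set.univ →
        (∀ v ∈ 𝓥, ∃ u ∈ 𝓤, v ⊆ u) →
        ∃ p : ℝ × ℝ, ∃ 𝓦 : Finset (Set (ℝ × ℝ)),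
          𝓦 ⊆ 𝓥 ∧ n + 2 ≤ 𝓦.card ∧ ∀ v ∈ 𝓦, p ∈ v := by
  classical
  obtain ⟨f, hf⟩ := exists_coloring
  set m := n + 2 with hm
  have hm0 : 0 < m := by omega
  set D : ℕ → Set (ℝ × ℝ) := fun j => {p | p.2 = -p.1 ∧ f p.1 = (j : ℚ)} with hD
  set Uu : ℕ → Set (ℝ × ℝ) := fun i => {p | ∀ j < m, j ≠ i → p ∉ D j} with hUu
  -- off-diagonal points belong to every Uu i
  have hoff : ∀ (q : ℝ × ℝ), q.2 ≠ -q.1 → ∀ i, q ∈ Uu i := by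
    intro q hq i j _ _ hqD
    exact hq hqD.1
  have hUopen : ∀ i, sorgenfreyPlane.IsOpen (Uu i) := by
    intro i
    apply open_of_boxes
    intro p hp
    rcases lt_trichotomy p.2 (-p.1) with hlt | heq | hgt
    · refine ⟨(-p.1 - p.2) / 2, by linarith, ?_⟩
      intro q hq
      obtain ⟨⟨hs1, hs2⟩, ht1, ht2⟩ := hq
      refine hoff q ?_ i
      intro habs
      rw [habs] at ht1 ht2
      linarith
    · refine ⟨1, one_pos, ?_⟩
      intro q hq
      obtain ⟨⟨hs1, hs2⟩, ht1, ht2⟩ := hq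
      by_cases hst : q.2 = -q.1
      · have hsp : q.1 = p.1 := by
          rw [hst] at ht1
          linarith
        have hqp : q = p := by
          rw [Prod.ext_iff]
          exact ⟨hsp, by rw [hst, hsp, ← heq]⟩
        rwa [hqp]
      · exact hoff q hst i
    · refine ⟨1, one_pos, ?_⟩
      intro q hq
      obtain ⟨⟨hs1, hs2⟩, ht1, ht2⟩ := hq
      refine hoff q ?_ i
      intro habs
      rw [habs] at ht1
      linarith
  refine ⟨(Finset.range m).image Uu, ?_, ?_, ?_⟩
  · intro u hu
    obtain ⟨i, -, rfl⟩ := Finset.mem_image.mp hu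
    exact hUopen i
  · apply eq_univ_of_forall
    intro p
    by_cases hdiag : ∃ j < m, p ∈ D j
    · obtain ⟨j, hjm, hpj⟩ := hdiag
      refine ⟨Uu j, by simpa using ⟨j, hjm, rfl⟩, ?_⟩
      intro j' hj' hne hpj'
      have : (j' : ℚ) = (j : ℚ) := by rw [← hpj'.2, hpj.2]
      exact hne (by exact_mod_cast this)
    · push_neg at hdiag
      exact ⟨Uu 0, by simpa using ⟨0, hm0, rfl⟩, fun j hj _ => hdiag j hj⟩
  · intro 𝓥 h𝓥open h𝓥cov h𝓥ref
    set L := 𝓥.toList with hL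
    set dd : ℕ → ℝ := fun k => 1 / (k + 1) with hdd
    have hddpos : ∀ k, 0 < dd k := fun k => by positivity
    set A : ℕ → ℕ → Set ℝ := fun i nn => {x | f x = (i : ℚ) ∧
      (x, -x) ∈ L.getD nn.unpair.1 ∅ ∧
      Ico x (x + dd nn.unpair.2) ×ˢ Ico (-x) (-x + dd nn.unpair.2) ⊆ L.getD nn.unpair.1 ∅}
      with hA
    have hcov : ∀ i (U : Set ℝ), IsOpen U → U.Nonempty → ∃ k, ¬ IsMeagre (A i k ∩ U) := by
      intro i U hU hUne
      by_contra hcon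
      push_neg at hcon
      have hsub : f ⁻¹' {(i : ℚ)} ∩ U ⊆ ⋃ k, (A i k ∩ U) := by
        rintro x ⟨hx1, hx2⟩
        have hxuniv : (x, -x) ∈ ⋃₀ (𝓥 : Set (Set (ℝ × ℝ))) := by rw [h𝓥cov]; trivial
        obtain ⟨V, hV𝓥, hxV⟩ := hxuniv
        obtain ⟨δ, hδ, hbox0⟩ := exists_box (h𝓥open V hV𝓥) hxV
        have hbox : Ico x (x + δ) ×ˢ Ico (-x) (-x + δ) ⊆ V := hbox0
        have hVL : V ∈ L := by rwa [hL, Finset.mem_toList]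
        obtain ⟨jj, hjj⟩ := List.mem_iff_get.mp hVL
        obtain ⟨k, hk⟩ := exists_nat_one_div_lt hδ
        refine mem_iUnion.mpr ⟨Nat.pair jj.1 k, ⟨?_, ?_, ?_⟩, hx2⟩
        · exact hx1
        · simp only [Nat.unpair_pair]
          rw [List.getD_eq_get L ∅ jj, hjj]
          exact hxV
        · simp only [Nat.unpair_pair]
          rw [List.getD_eq_get L ∅ jj, hjj]
          refine Subset.trans ?_ hbox
          have hle : dd k ≤ δ := by
            have h9 : (1:ℝ) / ((k:ℝ) + 1) < δ := by exact_mod_cast hk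
            exact le_of_lt h9
          intro q hq
          exact ⟨⟨hq.1.1, lt_of_lt_of_le hq.1.2 (by linarith)⟩,
            ⟨hq.2.1, lt_of_lt_of_le hq.2.2 (by linarith)⟩⟩
      exact hf (i : ℚ) U hU hUne (IsMeagre.mono hsub (isMeagre_iUnion fun k => hcon k))
    obtain ⟨G, hGo, hGne, κ, hκ⟩ := rec_dense A hcov m
    set Vv : ℕ → Set (ℝ × ℝ) := fun i => L.getD (κ i).unpair.1 ∅ with hVv
    set δv : ℕ → ℝ := fun i => dd (κ i).unpair.2 with hδv
    have hδvpos : ∀ i, 0 < δv i := fun i => hddpos _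
    set N := (Finset.range m).sup (fun i => (κ i).unpair.2) with hN
    set ε : ℝ := 1 / (N + 1) with hε
    have hεpos : 0 < ε := by rw [hε]; positivity
    have hεle : ∀ i < m, ε ≤ δv i := by
      intro i hi
      have h1 : (κ i).unpair.2 ≤ N :=
        Finset.le_sup (f := fun i => (κ i).unpair.2) (Finset.mem_range.mpr hi)
      show (1:ℝ) / ((N:ℝ) + 1) ≤ 1 / (((κ i).unpair.2 : ℝ) + 1)
      apply one_div_le_one_div_of_le (by positivity)
      have h2 : ((κ i).unpair.2 : ℝ) ≤ (N : ℝ) := by exact_mod_cast h1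
      linarith
    obtain ⟨g, hgG⟩ := hGne
    obtain ⟨r, hr, hball⟩ := Metric.isOpen_iff.mp hGo g hgG
    set c := min r ε with hc
    have hcpos : 0 < c := lt_min hr hεpos
    have hcr : c ≤ r := min_le_left _ _
    have hcε : c ≤ ε := min_le_right _ _
    have hIsub : Ioo g (g + c/2) ⊆ G := by
      intro y hy
      apply hball
      rw [Metric.mem_ball, Real.dist_eq, abs_of_pos (by linarith [hy.1])]
      linarith [hy.2]
    have hxex : ∀ i < m, ∃ x, x ∈ Ioo g (g + c/2) ∧ x ∈ A i (κ i) := by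
      intro i hi
      have hyG : g + c/4 ∈ Ioo g (g + c/2) := by constructor <;> linarith
      have hycl : g + c/4 ∈ closure (A i (κ i)) := hκ i hi (hIsub hyG)
      obtain ⟨x, hx1, hx2⟩ := _root_.mem_closure_iff.mp hycl (Ioo g (g + c/2)) isOpen_Ioo hyG
      exact ⟨x, hx1, hx2⟩
    choose! x hxI hxA using hxex
    have hrange_ne : (Finset.range m).Nonempty := ⟨0, Finset.mem_range.mpr hm0⟩
    set S := (Finset.range m).image x with hS
    have hSne : S.Nonempty := hrange_ne.image x
    set s := S.max' hSne with hs
    set u := S.min' hSne with hu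
    have hsI : s ∈ Ioo g (g + c/2) := by
      obtain ⟨i0, hi0, hieq⟩ := Finset.mem_image.mp (S.max'_mem hSne)
      rw [hs, ← hieq]; exact hxI i0 (Finset.mem_range.mp hi0)
    have huI : u ∈ Ioo g (g + c/2) := by
      obtain ⟨i0, hi0, hieq⟩ := Finset.mem_image.mp (S.min'_mem hSne)
      rw [hu, ← hieq]; exact hxI i0 (Finset.mem_range.mp hi0)
    have hp : ∀ i < m, (s, -u) ∈ Vv i := by
      intro i hi
      have h1 : x i ≤ s := S.le_max' _ (Finset.mem_image_of_mem x (Finset.mem_range.mpr hi))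
      have h2 : u ≤ x i := S.min'_le _ (Finset.mem_image_of_mem x (Finset.mem_range.mpr hi))
      have hxiI := hxI i hi
      have hεδ := hεle i hi
      have hmem : (s, -u) ∈ Ico (x i) (x i + δv i) ×ˢ Ico (-(x i)) (-(x i) + δv i) := by
        simp only [Set.mem_prod, Set.mem_Ico]
        refine ⟨⟨h1, by linarith [hsI.2, hxiI.1]⟩, by linarith, by linarith [huI.1, hxiI.2]⟩
      exact (hxA i hi).2.2 hmem
    have hVmem : ∀ i < m, Vv i ∈ 𝓥 := by
      intro i hi
      have hw : (x i, -(x i)) ∈ Vv i := (hxA i hi).2.1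
      by_cases hlen : (κ i).unpair.1 < L.length
      · have heq : Vv i = L.get ⟨(κ i).unpair.1, hlen⟩ := List.getD_eq_get L ∅ ⟨_, hlen⟩
        have hmemL : L.get ⟨(κ i).unpair.1, hlen⟩ ∈ 𝓥.toList := List.get_mem L ⟨_, hlen⟩
        rw [heq]
        rwa [Finset.mem_toList] at hmemL
      · exfalso
        have hempty : Vv i = ∅ := List.getD_eq_default L ∅ (le_of_not_gt hlen)
        rw [hempty] at hw
        exact hw
    have hVsub : ∀ i < m, Vv i ⊆ Uu i := by
      intro i hi
      obtain ⟨uSet, huU, hVu⟩ := h𝓥ref (Vv i) (hVmem i hi)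
      obtain ⟨c', hc'm, rfl⟩ := Finset.mem_image.mp huU
      have hw : (x i, -(x i)) ∈ Uu c' := hVu (hxA i hi).2.1
      have hceq : c' = i := by
        by_contra hne
        exact hw i hi (fun h => hne h.symm) ⟨rfl, (hxA i hi).1⟩
      rwa [hceq] at hVu
    have hinj : Set.InjOn Vv (Finset.range m) := by
      intro i hi j hj hEq
      by_contra hne
      have h1 : (x i, -(x i)) ∈ Vv j := by
        rw [← hEq]; exact (hxA i (Finset.mem_range.mp (Finset.mem_coe.mp hi))).2.1
      have h2 := hVsub j (Finset.mem_range.mp (Finset.mem_coe.mp hj)) h1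
      exact h2 i (Finset.mem_range.mp (Finset.mem_coe.mp hi)) hne
        ⟨rfl, (hxA i (Finset.mem_range.mp (Finset.mem_coe.mp hi))).1⟩
    refine ⟨(s, -u), (Finset.range m).image Vv, ?_, ?_, ?_⟩
    · intro v hv
      obtain ⟨i, hi, rfl⟩ := Finset.mem_image.mp hv
      exact hVmem i (Finset.mem_range.mp hi)
    · rw [Finset.card_image_of_injOn hinj, Finset.card_range]
    · intro v hv
      obtain ⟨i, hi, rfl⟩ := Finset.mem_image.mp hv
      exact hp i (Finset.mem_range.mp hi)
end

section
/- Let n be a natural number and let B₁, …, B_{n+2} be pairwise disjoint Bernstein subsets of ℝ whose union is ℝ. Define subsets of the Sorgenfrey plane S × S by U₀ = {(x, y) : y < −x} and U_i = ⋃_{x ∈ B_i} [x, ∞) × [−x, ∞) for 1 ≤ i ≤ n + 2. Then {U₀, U₁, …, U_{n+2}} is an open cover of S × S, and for every open shrinking {V₀, V₁, …, V_{n+2}} of this cover there exists a point of S × S belonging simultaneously to all of V₁, …, V_{n+2}. -/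
open Set Metric

lemma sorg_basic (a b : ℝ) : sorgenfreyLine.IsOpen (Set.Ico a b) :=
  TopologicalSpace.GenerateOpen.basic _ ⟨a, b, rfl⟩

lemma sorg_isOpen_iff {s : Set ℝ} :
    sorgenfreyLine.IsOpen s ↔ ∀ a ∈ s, ∃ b, a < b ∧ Set.Ico a b ⊆ s := by
  constructor
  · intro h
    have h' : TopologicalSpace.GenerateOpen {s : Set ℝ | ∃ a b : ℝ, s = Set.Ico a b} s := h
    clear h
    induction h' with
    | basic t ht =>
      obtain ⟨c, d, rfl⟩ := ht
      intro a ha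
      exact ⟨d, ha.2, fun x hx => ⟨le_trans ha.1 hx.1, hx.2⟩⟩
    | univ => exact fun a _ => ⟨a + 1, by linarith, fun x _ => trivial⟩
    | inter t₁ t₂ _ _ ih₁ ih₂ =>
      intro a ha
      obtain ⟨b₁, hb₁, hs₁⟩ := ih₁ a ha.1
      obtain ⟨b₂, hb₂, hs₂⟩ := ih₂ a ha.2
      exact ⟨min b₁ b₂, lt_min hb₁ hb₂,
        fun x hx => ⟨hs₁ ⟨hx.1, lt_of_lt_of_le hx.2 (min_le_left _ _)⟩,
          hs₂ ⟨hx.1, lt_of_lt_of_le hx.2 (min_le_right _ _)⟩⟩⟩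
    | sUnion S _ ih =>
      intro a ha
      obtain ⟨t, htS, hat⟩ := ha
      obtain ⟨b, hb, hs⟩ := ih t htS a hat
      exact ⟨b, hb, fun x hx => ⟨t, htS, hs hx⟩⟩
  · intro h
    have : ∀ a : ℝ, ∃ b, a ∈ s → (a < b ∧ Set.Ico a b ⊆ s) := by
      intro a
      by_cases ha : a ∈ s
      · obtain ⟨b, hb⟩ := h a ha
        exact ⟨b, fun _ => hb⟩
      · exact ⟨a, fun h' => absurd h' ha⟩
    choose f hf using this
    have hs : s = ⋃₀ ((fun a => Set.Ico a (f a)) '' s) := by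
      apply Set.Subset.antisymm
      · intro a ha
        exact ⟨Set.Ico a (f a), ⟨a, ha, rfl⟩, le_refl a, (hf a ha).1⟩
      · rintro x ⟨t, ⟨a, ha, rfl⟩, hx⟩
        exact (hf a ha).2 hx
    rw [hs]
    exact TopologicalSpace.GenerateOpen.sUnion _
      (by rintro t ⟨a, _, rfl⟩; exact TopologicalSpace.GenerateOpen.basic _ ⟨a, f a, rfl⟩)

lemma sorgPlane_isOpen_iff {s : Set (ℝ × ℝ)} :
    sorgenfreyPlane.IsOpen s ↔
      ∀ p ∈ s, ∃ ε > 0, Set.Ico p.1 (p.1 + ε) ×ˢ Set.Ico p.2 (p.2 + ε) ⊆ s := by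
  letI : TopologicalSpace ℝ := sorgenfreyLine
  have hP : (sorgenfreyPlane.IsOpen s) = (IsOpen s) := rfl
  rw [hP, isOpen_prod_iff]
  constructor
  · intro h p hp
    obtain ⟨u, v, hu, hv, hpu, hpv, huv⟩ := h p.1 p.2 hp
    obtain ⟨b₁, hb₁, hs₁⟩ := sorg_isOpen_iff.mp hu p.1 hpu
    obtain ⟨b₂, hb₂, hs₂⟩ := sorg_isOpen_iff.mp hv p.2 hpv
    refine ⟨min (b₁ - p.1) (b₂ - p.2), lt_min (by linarith) (by linarith), ?_⟩
    rintro ⟨x, y⟩ ⟨hx, hy⟩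
    refine huv ⟨hs₁ ⟨hx.1, ?_⟩, hs₂ ⟨hy.1, ?_⟩⟩
    · calc x < p.1 + min (b₁ - p.1) (b₂ - p.2) := hx.2
        _ ≤ b₁ := by have := min_le_left (b₁ - p.1) (b₂ - p.2); linarith
    · calc y < p.2 + min (b₁ - p.1) (b₂ - p.2) := hy.2
        _ ≤ b₂ := by have := min_le_right (b₁ - p.1) (b₂ - p.2); linarith
  · intro h a b hab
    obtain ⟨ε, hε, hsub⟩ := h (a, b) hab
    exact ⟨Set.Ico a (a + ε), Set.Ico b (b + ε), sorg_basic a (a + ε), sorg_basic b (b + ε),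
      ⟨le_refl a, by linarith⟩, ⟨le_refl b, by linarith⟩, hsub⟩


lemma not_countable_cantor : ¬ Countable (ℕ → Bool) := by
  intro h
  have h2 : Countable (Set ℕ) :=
    Countable.of_equiv _ ((Equiv.refl ℕ).arrowCongr Equiv.propEquivBool).symm
  obtain ⟨f, hf⟩ := (countable_iff_exists_injective (Set ℕ)).mp h2
  exact Function.cantor_injective f hf

/-- An uncountable Gδ subset of ℝ contains an uncountable closed subset. -/
lemma exists_closed_unc_subset (O : ℕ → Set ℝ) (hO : ∀ k, IsOpen (O k))
    (hD : ¬(⋂ k, O k).Countable) :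
    ∃ C : Set ℝ, IsClosed C ∧ ¬C.Countable ∧ C ⊆ ⋂ k, O k := by
  obtain ⟨m, hm⟩ : ∃ m : ℕ, ¬((⋂ k, O k) ∩ Set.Ioo (-(m : ℝ) - 1) ((m : ℝ) + 1)).Countable := by
    by_contra h
    push_neg at h
    apply hD
    have hsub : (⋂ k, O k) ⊆
        ⋃ m : ℕ, ((⋂ k, O k) ∩ Set.Ioo (-(m : ℝ) - 1) ((m : ℝ) + 1)) := by
      intro y hy
      obtain ⟨m, hm⟩ := exists_nat_gt |y|
      have := abs_lt.mp hm
      exact mem_iUnion.mpr ⟨m, hy, by constructor <;> [linarith [this.1]; linarith [this.2]]⟩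
    exact (Set.countable_iUnion h).mono hsub
  set O' : ℕ → Set ℝ := fun k => O k ∩ Set.Ioo (-(m : ℝ) - 1) ((m : ℝ) + 1) with hO'def
  have hO'open : ∀ k, IsOpen (O' k) := fun k => (hO k).inter isOpen_Ioo
  have hiff : (⋂ k, O' k) = (⋂ k, O k) ∩ Set.Ioo (-(m : ℝ) - 1) ((m : ℝ) + 1) := by
    ext y
    simp only [O', mem_iInter, mem_inter_iff]
    exact ⟨fun h => ⟨fun k => (h k).1, (h 0).2⟩, fun h k => ⟨h.1 k, h.2⟩⟩
  have hcne : ∀ k, ((m : ℝ) + 1) ∈ (O' k)ᶜ := by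
    intro k hmem
    exact absurd hmem.2.2 (lt_irrefl _)
  set C' : Set (ℝ × (ℕ → ℝ)) := {p | ∀ k, p.2 k * Metric.infDist p.1 (O' k)ᶜ = 1} with hC'def
  have hC'closed : IsClosed C' := by
    have : C' = ⋂ k, (fun p : ℝ × (ℕ → ℝ) =>
        p.2 k * Metric.infDist p.1 (O' k)ᶜ) ⁻¹' {1} := by
      ext p; simp [C', mem_iInter]
    rw [this]
    exact isClosed_iInter fun k => isClosed_singleton.preimage
      (((continuous_apply k).comp continuous_snd).mul
        ((Metric.continuous_infDist_pt _).comp continuous_fst))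
  have hfst : ∀ p ∈ C', p.1 ∈ ⋂ k, O' k := by
    intro p hp
    rw [mem_iInter]
    intro k
    by_contra hx
    have h0 : Metric.infDist p.1 (O' k)ᶜ = 0 := Metric.infDist_zero_of_mem hx
    have := hp k
    rw [h0, mul_zero] at this
    exact one_ne_zero this.symm
  have hC'unc : ¬C'.Countable := by
    intro hc
    apply hm
    have hsub : ((⋂ k, O k) ∩ Set.Ioo (-(m : ℝ) - 1) ((m : ℝ) + 1)) ⊆ Prod.fst '' C' := by
      intro x hx
      have hx' : x ∈ ⋂ k, O' k := by rw [hiff]; exact hx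
      refine ⟨(x, fun k => (Metric.infDist x (O' k)ᶜ)⁻¹), fun k => ?_, rfl⟩
      have hxk : x ∈ O' k := mem_iInter.mp hx' k
      have hne : Metric.infDist x (O' k)ᶜ ≠ 0 := by
        have hpos : 0 < Metric.infDist x (O' k)ᶜ :=
          ((hO'open k).isClosed_compl.notMem_iff_infDist_pos ⟨_, hcne k⟩).mp
            (by simpa using hxk)
        exact ne_of_gt hpos
      field_simp
    exact (hc.image Prod.fst).mono hsub
  obtain ⟨f, hfr, hfc, hfi⟩ := hC'closed.exists_nat_bool_injection_of_not_countable hC'unc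
  have hsndeq : ∀ p ∈ C', ∀ k, p.2 k = (Metric.infDist p.1 (O' k)ᶜ)⁻¹ := by
    intro p hp k
    have h := hp k
    have hne : Metric.infDist p.1 (O' k)ᶜ ≠ 0 := by
      intro h0; rw [h0, mul_zero] at h; exact one_ne_zero h.symm
    field_simp
    linarith [h]
  refine ⟨Prod.fst '' Set.range f, ((isCompact_range hfc).image continuous_fst).isClosed, ?_, ?_⟩
  · intro hc
    have hinj : Function.Injective (Prod.fst ∘ f) := by
      intro a b hab
      apply hfi
      have ha := hfr (Set.mem_range_self a)
      have hb := hfr (Set.mem_range_self b)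
      have h1 : (f a).1 = (f b).1 := hab
      refine Prod.ext h1 (funext fun k => ?_)
      rw [hsndeq _ ha k, hsndeq _ hb k, h1]
    have : Set.range (Prod.fst ∘ f) = Prod.fst '' Set.range f := Set.range_comp _ _
    rw [← this] at hc
    have hcnt : Countable (ℕ → Bool) := by
      have := hc.to_subtype
      exact Countable.of_equiv _ (Equiv.ofInjective _ hinj).symm
    exact not_countable_cantor hcnt
  · rintro y ⟨p, hp, rfl⟩
    have h := hfst p (hfr hp)
    rw [hiff] at h
    exact h.1

/-- Given pairwise disjoint Bernstein sets `B₁, …, B_{n+2}` covering `ℝ`, the family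
`U₀ = {(x,y) : y < -x}`, `U_i = ⋃_{x ∈ Bᵢ} [x,∞) × [-x,∞)` is an open cover of the
Sorgenfrey plane, and every open shrinking `V₀, …, V_{n+2}` of it has a point lying in
all of `V₁, …, V_{n+2}` simultaneously. -/
theorem sorgenfrey_plane_bernstein_cover (n : ℕ) (B : Fin (n + 2) → Set ℝ)
    (hdisj : Pairwise (Function.onFun Disjoint B))
    (hBern : ∀ i, IsBernstein (B i))
    (hBcover : (⋃ i, B i) = Set.univ)
    (U : Fin (n + 3) → Set (ℝ × ℝ))
    (hU0 : U 0 = {p : ℝ × ℝ | p.2 < -p.1})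
    (hUi : ∀ i : Fin (n + 2), U i.succ = ⋃ x ∈ B i, Set.Ici x ×ˢ Set.Ici (-x)) :
    (∀ i, sorgenfreyPlane.IsOpen (U i)) ∧
    (⋃ i, U i) = Set.univ ∧
    ∀ V : Fin (n + 3) → Set (ℝ × ℝ),
      (∀ i, sorgenfreyPlane.IsOpen (V i)) →
      (∀ i, V i ⊆ U i) →
      (⋃ i, V i) = Set.univ →
      ∃ p : ℝ × ℝ, ∀ i : Fin (n + 2), p ∈ V i.succ := by
  classical
  refine ⟨?_, ?_, ?_⟩
  · -- openness
    intro j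
    rcases Fin.eq_zero_or_eq_succ j with rfl | ⟨i, rfl⟩
    · rw [sorgPlane_isOpen_iff, hU0]
      rintro ⟨a, b⟩ hp
      simp only [Set.mem_setOf_eq] at hp
      refine ⟨(-a - b) / 2, by linarith, ?_⟩
      rintro ⟨x, y⟩ ⟨hx, hy⟩
      simp only [Set.mem_Ico] at hx hy
      simp only [Set.mem_setOf_eq]
      linarith [hx.2, hy.2]
    · rw [sorgPlane_isOpen_iff, hUi i]
      intro p hp
      simp only [Set.mem_iUnion] at hp
      obtain ⟨x, hxB, hp1, hp2⟩ := hp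
      refine ⟨1, one_pos, ?_⟩
      rintro ⟨a, b⟩ ⟨ha, hb⟩
      simp only [Set.mem_Ico] at ha hb
      simp only [Set.mem_iUnion]
      exact ⟨x, hxB, le_trans hp1 ha.1, le_trans hp2 hb.1⟩
  · -- cover
    apply Set.eq_univ_of_forall
    intro p
    by_cases hp : p.2 < -p.1
    · exact Set.mem_iUnion.mpr ⟨0, by rw [hU0]; exact hp⟩
    · push_neg at hp
      have : p.1 ∈ ⋃ i, B i := hBcover ▸ Set.mem_univ _
      obtain ⟨i, hi⟩ := Set.mem_iUnion.mp this
      refine Set.mem_iUnion.mpr ⟨i.succ, ?_⟩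
      rw [hUi i]
      simp only [Set.mem_iUnion]
      exact ⟨p.1, hi, Set.self_mem_Ici, Set.mem_Ici.mpr hp⟩
  · -- shrinking property
    intro V hVopen hVsub hVcover
    -- every anti-diagonal point over B i lies in V i.succ
    have hdiag : ∀ (i : Fin (n + 2)) (t : ℝ), t ∈ B i → (t, -t) ∈ V i.succ := by
      intro i t ht
      have : (t, -t) ∈ ⋃ j, V j := hVcover ▸ Set.mem_univ _
      obtain ⟨j, hj⟩ := Set.mem_iUnion.mp this
      rcases Fin.eq_zero_or_eq_succ j with rfl | ⟨i', rfl⟩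
      · have := hVsub 0 hj
        rw [hU0] at this
        exact absurd this (lt_irrefl (-t))
      · have h' := hVsub i'.succ hj
        rw [hUi i'] at h'
        simp only [Set.mem_iUnion] at h'
        obtain ⟨x, hxB, hx1, hx2⟩ := h'
        have hx1' : x ≤ t := hx1
        have hx2' : x = t := le_antisymm hx1' (by simpa using hx2)
        subst hx2'
        rcases eq_or_ne i' i with rfl | hne
        · exact hj
        · exact absurd ht (Set.disjoint_left.mp (hdisj hne) hxB)
    -- choose half-open square neighborhoods
    have hex : ∀ (i : Fin (n + 2)) (t : ℝ), ∃ e : ℝ, 0 < e ∧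
        (t ∈ B i → Set.Ico t (t + e) ×ˢ Set.Ico (-t) (-t + e) ⊆ V i.succ) := by
      intro i t
      by_cases ht : t ∈ B i
      · obtain ⟨ε, hε, hsub⟩ := sorgPlane_isOpen_iff.mp (hVopen i.succ) (t, -t) (hdiag i t ht)
        exact ⟨ε, hε, fun _ => hsub⟩
      · exact ⟨1, one_pos, fun h => absurd h ht⟩
    choose e he hesub using hex
    set S : Fin (n + 2) → ℕ → Set ℝ :=
      fun i k => {t | t ∈ B i ∧ 1 / ((k : ℝ) + 1) < e i t} with hSdef
    have hDcount : ∀ i : Fin (n + 2), (⋂ k : ℕ, (closure (S i k))ᶜ).Countable := by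
      intro i
      by_contra hD
      obtain ⟨C, hCcl, hCunc, hCsub⟩ := exists_closed_unc_subset
        (fun k => (closure (S i k))ᶜ) (fun k => isClosed_closure.isOpen_compl) hD
      obtain ⟨⟨t, htB, htC⟩, -⟩ := hBern i C hCcl hCunc
      obtain ⟨k, hk⟩ := exists_nat_one_div_lt (he i t)
      have htS : t ∈ S i k := ⟨htB, hk⟩
      exact (Set.mem_iInter.mp (hCsub htC) k) (subset_closure htS)
    have hne : (⋃ i, ⋂ k : ℕ, (closure (S i k))ᶜ) ≠ Set.univ := by
      intro h
      exact Cardinal.not_countable_real (h ▸ Set.countable_iUnion hDcount)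
    obtain ⟨x, hx⟩ := (Set.ne_univ_iff_exists_notMem _).mp hne
    have hxcl : ∀ i, ∃ k : ℕ, x ∈ closure (S i k) := by
      intro i
      by_contra h
      push_neg at h
      exact hx (Set.mem_iUnion.mpr ⟨i, Set.mem_iInter.mpr fun k => h k⟩)
    choose kf hkf using hxcl
    set K : ℕ := Finset.univ.sup kf with hKdef
    have hxK : ∀ i, x ∈ closure (S i K) := by
      intro i
      refine closure_mono ?_ (hkf i)
      intro t ht
      refine ⟨ht.1, lt_of_le_of_lt ?_ ht.2⟩
      apply one_div_le_one_div_of_le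
      · positivity
      · have : kf i ≤ K := Finset.le_sup (Finset.mem_univ i)
        have := (Nat.cast_le (α := ℝ)).mpr this
        linarith
    set c : ℝ := 1 / ((K : ℝ) + 1) with hcdef
    have hc : 0 < c := by positivity
    have hpick : ∀ i, ∃ t ∈ S i K, dist x t < c / 4 := by
      intro i
      exact Metric.mem_closure_iff.mp (hxK i) (c / 4) (by linarith)
    choose t ht htd using hpick
    refine ⟨(x + c / 4, -x + c / 4), ?_⟩
    intro i
    apply hesub i (t i) (ht i).1
    have hd := abs_lt.mp (by rw [← Real.dist_eq]; exact htd i)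
    have hei : c < e i (t i) := (ht i).2
    constructor
    · simp only [Set.mem_Ico]
      constructor <;> [linarith [hd.1, hd.2]; linarith [hd.1, hd.2]]
    · simp only [Set.mem_Ico]
      constructor <;> [linarith [hd.1, hd.2]; linarith [hd.1, hd.2]]
end

section
/- There exist 2^{ℵ₀} pairwise disjoint Bernstein subsets of ℝ: there is a family (B_ι)_{ι ∈ I} of subsets of ℝ indexed by a set I of cardinality continuum such that the B_ι are pairwise disjoint and each B_ι is a Bernstein set. -/
open Cardinal Set Function

noncomputable section BernsteinAux

/-- Every uncountable closed subset of `ℝ` has cardinality at least continuum. -/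
lemma bern_mk_ge {C : Set ℝ} (h1 : IsClosed C) (h2 : ¬C.Countable) :
    Cardinal.continuum ≤ #C := by
  obtain ⟨f, hfC, -, hinj⟩ := h1.exists_nat_bool_injection_of_not_countable h2
  have : #(ℕ → Bool) ≤ #C :=
    mk_le_of_injective (f := fun x => (⟨f x, hfC ⟨x, rfl⟩⟩ : C))
      (fun a b hab => hinj (by simpa using congrArg Subtype.val hab))
  refine le_trans (le_of_eq ?_) this
  rw [← power_def, mk_bool, mk_nat, two_power_aleph0]

/-- There are at most continuum many closed subsets of `ℝ`. -/
lemma bern_mk_closeds_le : #{C : Set ℝ // IsClosed C} ≤ Cardinal.continuum := by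
  have key : ∀ C : Set ℝ, IsClosed C →
      Cᶜ = ⋃ q ∈ {q : ℚ × ℚ | Ioo (q.1 : ℝ) (q.2 : ℝ) ⊆ Cᶜ}, Ioo (q.1 : ℝ) q.2 := by
    intro C hC
    apply Set.Subset.antisymm
    · intro x hx
      obtain ⟨ε, hε, hball⟩ := Metric.isOpen_iff.mp hC.isOpen_compl x hx
      obtain ⟨a, ha1, ha2⟩ := exists_rat_btwn (show x - ε < x by linarith)
      obtain ⟨b, hb1, hb2⟩ := exists_rat_btwn (show x < x + ε by linarith)
      have hsub : Ioo (a : ℝ) (b : ℝ) ⊆ Cᶜ := by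
        intro y hy
        apply hball
        rw [Real.ball_eq_Ioo]
        exact ⟨lt_trans ha1 hy.1, lt_trans hy.2 hb2⟩
      have hmem : ((a, b) : ℚ × ℚ) ∈ {q : ℚ × ℚ | Ioo (q.1 : ℝ) (q.2 : ℝ) ⊆ Cᶜ} := hsub
      exact Set.mem_biUnion hmem ⟨ha2, hb1⟩
    · exact Set.iUnion₂_subset fun q hq => hq
  have hinj : Function.Injective
      (fun C : {C : Set ℝ // IsClosed C} =>
        ({q : ℚ × ℚ | Ioo (q.1 : ℝ) (q.2 : ℝ) ⊆ (C : Set ℝ)ᶜ} : Set (ℚ × ℚ))) := by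
    intro C D h
    have h' : {q : ℚ × ℚ | Ioo (q.1 : ℝ) (q.2 : ℝ) ⊆ (C : Set ℝ)ᶜ}
        = {q : ℚ × ℚ | Ioo (q.1 : ℝ) (q.2 : ℝ) ⊆ (D : Set ℝ)ᶜ} := h
    have := key C.1 C.2
    rw [h', ← key D.1 D.2] at this
    exact Subtype.ext (compl_injective this)
  calc #{C : Set ℝ // IsClosed C} ≤ #(Set (ℚ × ℚ)) := mk_le_of_injective hinj
    _ = Cardinal.continuum := by
        rw [mk_set, mk_prod, Cardinal.mkRat, lift_aleph0, aleph0_mul_aleph0, two_power_aleph0]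

/-- The index type of "requirements". -/
abbrev BernP : Type := ℝ × {C : Set ℝ // IsClosed C ∧ ¬C.Countable}

lemma bern_mk_P : #BernP = Cardinal.continuum := by
  have h𝒞 : #{C : Set ℝ // IsClosed C ∧ ¬C.Countable} ≤ Cardinal.continuum :=
    le_trans (mk_subtype_mono fun _ h => h.1) bern_mk_closeds_le
  have c0 : {C : Set ℝ // IsClosed C ∧ ¬C.Countable} :=
    ⟨Set.univ, isClosed_univ, Cardinal.not_countable_real⟩
  apply le_antisymm
  · calc #BernP = #ℝ * #{C : Set ℝ // IsClosed C ∧ ¬C.Countable} := by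
          simpa only [Cardinal.lift_id] using mk_prod ℝ {C : Set ℝ // IsClosed C ∧ ¬C.Countable}
      _ ≤ Cardinal.continuum * Cardinal.continuum := by
          exact mul_le_mul' (le_of_eq mk_real) h𝒞
      _ = Cardinal.continuum := continuum_mul_self
  · calc Cardinal.continuum = #ℝ := mk_real.symm
      _ ≤ #BernP := mk_le_of_injective (f := fun r => ((r, c0) : BernP))
          (fun a b hab => congrArg Prod.fst hab)

/-- From a big set we can always pick an element avoiding a small family of values. -/
lemma bern_key {S : Set ℝ} (hS : Cardinal.continuum ≤ #S) {β : Type}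
    (hβ : #β < Cardinal.continuum) (g : β → ℝ) :
    ∃ x, x ∈ S ∧ ∀ b, g b ≠ x := by
  by_contra h
  push_neg at h
  have hsub : S ⊆ Set.range g := by
    intro x hx
    obtain ⟨b, hb⟩ := h x hx
    exact ⟨b, hb⟩
  have : #S ≤ #β := le_trans (mk_le_mk_of_subset hsub) mk_range_le
  exact absurd (lt_of_le_of_lt (hS.trans this) hβ) (lt_irrefl _)

abbrev BernT : Type := Cardinal.continuum.ord.ToType

/-- The transfinite recursion picking a fresh point for each requirement. -/
def bernPick (e : BernT ≃ BernP) : BernT → ℝ :=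
  IsWellFounded.fix (α := BernT) (· < ·)
    (fun x ih =>
      Classical.choose (bern_key (bern_mk_ge (e x).2.2.1 (e x).2.2.2)
        (Cardinal.mk_Iio_ord_toType x) (fun y : Set.Iio x => ih y.1 y.2)))

lemma bernPick_spec (e : BernT ≃ BernP) (x : BernT) :
    bernPick e x ∈ ((e x).2 : Set ℝ) ∧ ∀ y : Set.Iio x, bernPick e y.1 ≠ bernPick e x := by
  have h := IsWellFounded.fix_eq (α := BernT) (· < ·)
    (fun x ih =>
      Classical.choose (bern_key (bern_mk_ge (e x).2.2.1 (e x).2.2.2)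
        (Cardinal.mk_Iio_ord_toType x) (fun y : Set.Iio x => ih y.1 y.2))) x
  have hspec := Classical.choose_spec (bern_key (bern_mk_ge (e x).2.2.1 (e x).2.2.2)
    (Cardinal.mk_Iio_ord_toType x) (fun y : Set.Iio x => bernPick e y.1))
  rw [show bernPick e x = Classical.choose (bern_key (bern_mk_ge (e x).2.2.1 (e x).2.2.2)
    (Cardinal.mk_Iio_ord_toType x) (fun y : Set.Iio x => bernPick e y.1)) from h]
  exact hspec

lemma bernPick_injective (e : BernT ≃ BernP) : Function.Injective (bernPick e) := by
  intro a b hab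
  rcases lt_trichotomy a b with h | h | h
  · exact absurd hab ((bernPick_spec e b).2 ⟨a, h⟩)
  · exact h
  · exact absurd hab.symm ((bernPick_spec e a).2 ⟨b, h⟩)

end BernsteinAux

/-- There exist continuum many pairwise disjoint Bernstein subsets of `ℝ`. -/
theorem exists_continuum_disjoint_bernstein_sets :
    ∃ (I : Type) (B : I → Set ℝ),
      Cardinal.mk I = Cardinal.continuum ∧
      Pairwise (Function.onFun Disjoint B) ∧
      ∀ ι : I, IsBernstein (B ι) := by
  classical
  have hT : #BernT = #BernP := by
    rw [bern_mk_P, Cardinal.mk_toType, Cardinal.card_ord]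
  obtain ⟨e⟩ := Cardinal.eq.mp hT
  refine ⟨ℝ, fun ι => bernPick e '' {x | (e x).1 = ι}, Cardinal.mk_real, ?_, ?_⟩
  · intro ι ι' hne
    rw [Function.onFun, Set.disjoint_left]
    rintro r ⟨x, hx, rfl⟩ ⟨x', hx', heq⟩
    exact hne (hx ▸ (bernPick_injective e heq ▸ hx'))
  · intro ι C hC hunc
    have hc : IsClosed C ∧ ¬C.Countable := ⟨hC, hunc⟩
    constructor
    · refine ⟨bernPick e (e.symm (ι, ⟨C, hc⟩)), ⟨_, ?_, rfl⟩, ?_⟩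
      · simp
      · have := (bernPick_spec e (e.symm (ι, ⟨C, hc⟩))).1
        simpa using this
    · refine ⟨bernPick e (e.symm (ι + 1, ⟨C, hc⟩)), ?_, ?_⟩
      · rintro ⟨x, hx, heq⟩
        have := bernPick_injective e heq
        rw [this] at hx
        simp at hx
      · have := (bernPick_spec e (e.symm (ι + 1, ⟨C, hc⟩))).1
        simpa using this
end

section
/- Let B ⊆ ℝ be a Bernstein set and let V be an open subset of the Sorgenfrey plane S × S such that (x, −x) ∈ V for every x ∈ B. Then for every nonempty open interval (c, d) ⊆ ℝ there exist a positive integer k and real numbers a < b with (a, b) ⊆ (c, d) such that the set {x ∈ B : [x, x + 1/k) × [−x, −x + 1/k) ⊆ V} ∩ (a, b) is dense in (a, b) with respect to the Euclidean topology of ℝ (equivalently, its Euclidean closure equals [a, b]). -/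
open Set

lemma sorgenfrey_line_nhds {U : Set ℝ} (hU : sorgenfreyLine.IsOpen U) :
    ∀ x ∈ U, ∃ ε > 0, Set.Ico x (x + ε) ⊆ U := by
  have hU' : TopologicalSpace.GenerateOpen {s : Set ℝ | ∃ a b : ℝ, s = Set.Ico a b} U := hU
  clear hU
  induction hU' with
  | basic s hs =>
    rintro x hx
    obtain ⟨a, b, rfl⟩ := hs
    exact ⟨b - x, by linarith [hx.1, hx.2], fun y hy => ⟨le_trans hx.1 hy.1, by linarith [hy.2]⟩⟩
  | univ => exact fun x _ => ⟨1, one_pos, fun y _ => trivial⟩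
  | inter s t _ _ ihs iht =>
    rintro x ⟨hxs, hxt⟩
    obtain ⟨ε₁, hε₁, h₁⟩ := ihs x hxs
    obtain ⟨ε₂, hε₂, h₂⟩ := iht x hxt
    refine ⟨min ε₁ ε₂, lt_min hε₁ hε₂, fun y hy => ⟨h₁ ⟨hy.1, ?_⟩, h₂ ⟨hy.1, ?_⟩⟩⟩
    · exact lt_of_lt_of_le hy.2 (by simp [min_le_left])
    · exact lt_of_lt_of_le hy.2 (by simp [min_le_right])
  | sUnion S _ ih =>
    rintro x ⟨s, hsS, hxs⟩
    obtain ⟨ε, hε, h⟩ := ih s hsS x hxs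
    exact ⟨ε, hε, fun y hy => ⟨s, hsS, h hy⟩⟩

lemma sorgenfrey_plane_nhds {V : Set (ℝ × ℝ)} (hV : sorgenfreyPlane.IsOpen V)
    {p : ℝ × ℝ} (hp : p ∈ V) :
    ∃ ε > 0, Set.Ico p.1 (p.1 + ε) ×ˢ Set.Ico p.2 (p.2 + ε) ⊆ V := by
  have h1 : V ∈ @nhds _ (TopologicalSpace.induced Prod.fst sorgenfreyLine ⊓
      TopologicalSpace.induced Prod.snd sorgenfreyLine) p :=
    @mem_nhds_iff (ℝ × ℝ) (TopologicalSpace.induced Prod.fst sorgenfreyLine ⊓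
      TopologicalSpace.induced Prod.snd sorgenfreyLine) p V |>.2 ⟨V, subset_rfl, hV, hp⟩
  rw [@nhds_inf (ℝ × ℝ) (TopologicalSpace.induced Prod.fst sorgenfreyLine)
      (TopologicalSpace.induced Prod.snd sorgenfreyLine) p,
    @nhds_induced ℝ (ℝ × ℝ) sorgenfreyLine Prod.fst p,
    @nhds_induced ℝ (ℝ × ℝ) sorgenfreyLine Prod.snd p] at h1
  obtain ⟨A, hA, Bs, hBs, hV'⟩ := Filter.mem_inf_iff.1 h1
  obtain ⟨U₁, hU₁, hA'⟩ := Filter.mem_comap.1 hA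
  obtain ⟨U₂, hU₂, hB'⟩ := Filter.mem_comap.1 hBs
  obtain ⟨T₁, hT₁U, hT₁o, hpT₁⟩ := @mem_nhds_iff ℝ sorgenfreyLine p.1 U₁ |>.1 hU₁
  obtain ⟨T₂, hT₂U, hT₂o, hpT₂⟩ := @mem_nhds_iff ℝ sorgenfreyLine p.2 U₂ |>.1 hU₂
  obtain ⟨ε₁, hε₁, h₁⟩ := sorgenfrey_line_nhds hT₁o _ hpT₁
  obtain ⟨ε₂, hε₂, h₂⟩ := sorgenfrey_line_nhds hT₂o _ hpT₂
  refine ⟨min ε₁ ε₂, lt_min hε₁ hε₂, fun q hq => ?_⟩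
  rw [hV']
  constructor
  · exact hA' (hT₁U (h₁ ⟨hq.1.1, lt_of_lt_of_le hq.1.2 (by simp [min_le_left])⟩))
  · exact hB' (hT₂U (h₂ ⟨hq.2.1, lt_of_lt_of_le hq.2.2 (by simp [min_le_right])⟩))

lemma exists_Icc_subset {U : Set ℝ} (hUo : IsOpen U) (hUd : Dense U) {u v : ℝ} (huv : u < v) :
    ∃ p q : ℝ, u < p ∧ p < q ∧ q < v ∧ q - p ≤ (v - u) / 2 ∧ Set.Icc p q ⊆ U := by
  obtain ⟨y, hyU, hy⟩ := hUd.exists_mem_open isOpen_Ioo (Set.nonempty_Ioo.2 huv)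
  obtain ⟨ε, hε, hball⟩ := Metric.isOpen_iff.1 (hUo.inter isOpen_Ioo) y ⟨hyU, hy⟩
  set δ : ℝ := min (ε / 2) ((v - u) / 4) with hδdef
  have hδ : 0 < δ := lt_min (by linarith) (by linarith [hy.1, hy.2])
  have hsub : Set.Icc (y - δ) (y + δ) ⊆ U ∩ Set.Ioo u v := by
    intro z hz
    apply hball
    rw [Metric.mem_ball, Real.dist_eq]
    have hδε : δ ≤ ε / 2 := min_le_left _ _
    rw [abs_lt]
    constructor <;> [linarith [hz.1]; linarith [hz.2]]
  have h1 : y - δ ∈ U ∩ Set.Ioo u v := hsub ⟨le_refl _, by linarith⟩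
  have h2 : y + δ ∈ U ∩ Set.Ioo u v := hsub ⟨by linarith, le_refl _⟩
  refine ⟨y - δ, y + δ, h1.2.1, by linarith, h2.2.2, ?_, fun z hz => (hsub hz).1⟩
  have : δ ≤ (v - u) / 4 := min_le_right _ _
  linarith

lemma not_countable_funBool : ¬Countable (ℕ → Bool) := by
  intro h
  have : Countable (Set ℕ) :=
    Countable.of_equiv _ ((Equiv.arrowCongr (Equiv.refl ℕ) (Equiv.propEquivBool)).symm)
  obtain ⟨f, hf⟩ := exists_injective_nat (Set ℕ)
  exact Function.cantor_injective f hf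

/-- Auxiliary recursion: a scheme of nested interval endpoints. -/
noncomputable def cantorFam (P : ℕ → ℝ → ℝ → (ℝ × ℝ) × ℝ × ℝ) (init : ℝ × ℝ) :
    List Bool → ℝ × ℝ
  | [] => init
  | hd :: tl =>
      let uv := cantorFam P init tl
      let Q := P tl.length uv.1 uv.2
      if hd then Q.2 else Q.1

/-- Inside any interval `(a, b)` and any countable family of open dense sets, there is
an uncountable closed set contained in the interval and in all the sets. -/
lemma exists_closed_not_countable {U : ℕ → Set ℝ} (hUo : ∀ n, IsOpen (U n))
    (hUd : ∀ n, Dense (U n)) {a b : ℝ} (hab : a < b) :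
    ∃ K : Set ℝ, IsClosed K ∧ ¬K.Countable ∧ K ⊆ Set.Ioo a b ∧ ∀ n, K ⊆ U n := by
  have hsplit : ∀ (n : ℕ) (u v : ℝ), ∃ Q : (ℝ × ℝ) × ℝ × ℝ, u < v →
      (u < Q.1.1 ∧ Q.1.1 < Q.1.2 ∧ Q.1.2 < Q.2.1 ∧ Q.2.1 < Q.2.2 ∧ Q.2.2 < v) ∧
      Q.1.2 - Q.1.1 ≤ (v - u) / 2 ∧ Q.2.2 - Q.2.1 ≤ (v - u) / 2 ∧
      Set.Icc Q.1.1 Q.1.2 ⊆ U n ∧ Set.Icc Q.2.1 Q.2.2 ⊆ U n := by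
    intro n u v
    by_cases h : u < v
    · obtain ⟨p, q, h1, h2, h3, h4, h5⟩ :=
        exists_Icc_subset (hUo n) (hUd n) (show u < (u + v) / 2 by linarith)
      obtain ⟨p', q', h1', h2', h3', h4', h5'⟩ :=
        exists_Icc_subset (hUo n) (hUd n) (show (u + v) / 2 < v by linarith)
      exact ⟨((p, q), (p', q')), fun _ =>
        ⟨⟨h1, h2, by linarith, h2', h3'⟩, by linarith, by linarith, h5, h5'⟩⟩
    · exact ⟨((0, 0), (0, 0)), fun h' => absurd h' h⟩
  choose P hP using hsplit
  set a₀ : ℝ := a + (b - a) / 4 with ha₀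
  set b₀ : ℝ := b - (b - a) / 4 with hb₀
  have hab₀ : a₀ < b₀ := by rw [ha₀, hb₀]; linarith
  set g : List Bool → ℝ × ℝ := cantorFam P (a₀, b₀) with hgdef
  have hgnil : g [] = (a₀, b₀) := rfl
  have hgcons : ∀ (hd : Bool) (tl : List Bool),
      g (hd :: tl) = if hd then (P tl.length (g tl).1 (g tl).2).2
        else (P tl.length (g tl).1 (g tl).2).1 := fun hd tl => rfl
  -- basic invariant
  have key : ∀ l : List Bool, (g l).1 < (g l).2 ∧ a₀ ≤ (g l).1 ∧ (g l).2 ≤ b₀ ∧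
      (g l).2 - (g l).1 ≤ (b₀ - a₀) * (2⁻¹ : ℝ) ^ l.length := by
    intro l
    induction l with
    | nil => rw [hgnil]; exact ⟨hab₀, le_refl _, le_refl _, by simp⟩
    | cons hd tl ih =>
      obtain ⟨h1, h2, h3, h4⟩ := ih
      obtain ⟨⟨o1, o2, o3, o4, o5⟩, l1, l2, -, -⟩ := hP tl.length (g tl).1 (g tl).2 h1
      have hpow : (0 : ℝ) < (2⁻¹ : ℝ) ^ tl.length := by positivity
      rw [hgcons]
      cases hd <;> simp only [if_true, if_false, Bool.false_eq_true, ite_false, ite_true]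
      · refine ⟨o2, by linarith, by linarith, ?_⟩
        have : ((false : Bool) :: tl).length = tl.length + 1 := rfl
        rw [this, pow_succ]
        nlinarith
      · refine ⟨o4, by linarith, by linarith, ?_⟩
        have : ((true : Bool) :: tl).length = tl.length + 1 := rfl
        rw [this, pow_succ]
        nlinarith
  -- the scheme
  set A : List Bool → Set ℝ := fun l => Set.Icc (g l).1 (g l).2 with hA
  have hclosed : ∀ l, IsClosed (A l) := fun l => isClosed_Icc
  have hnonempty : ∀ l, (A l).Nonempty := fun l => Set.nonempty_Icc.2 (key l).1.le
  have hanti : CantorScheme.Antitone A := by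
    intro l hd x hx
    obtain ⟨⟨o1, o2, o3, o4, o5⟩, -, -, -, -⟩ := hP l.length (g l).1 (g l).2 (key l).1
    simp only [hA] at hx ⊢
    rw [hgcons] at hx
    cases hd <;> simp only [Bool.false_eq_true, ite_false, ite_true] at hx <;>
      exact ⟨by linarith [hx.1], by linarith [hx.2]⟩
  have hsubU : ∀ (hd : Bool) (l : List Bool), A (hd :: l) ⊆ U l.length := by
    intro hd l
    obtain ⟨-, -, -, s1, s2⟩ := hP l.length (g l).1 (g l).2 (key l).1
    simp only [hA]
    rw [hgcons]
    cases hd <;> simp only [Bool.false_eq_true, ite_false, ite_true] <;> assumption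
  have hdisj : CantorScheme.Disjoint A := by
    intro l x y hxy
    obtain ⟨⟨o1, o2, o3, o4, o5⟩, -, -, -, -⟩ := hP l.length (g l).1 (g l).2 (key l).1
    have main : Disjoint (A (false :: l)) (A (true :: l)) := by
      rw [Set.disjoint_left]
      intro z hz1 hz2
      simp only [hA] at hz1 hz2
      rw [hgcons] at hz1 hz2
      simp only [Bool.false_eq_true, ite_false, ite_true] at hz1 hz2
      linarith [hz1.2, hz2.1]
    cases x <;> cases y <;> simp at hxy <;> [exact main; exact main.symm]
  have hvd : CantorScheme.VanishingDiam A := by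
    intro x
    have hbound : ∀ n : ℕ, Metric.ediam (A (PiNat.res x n)) ≤
        ENNReal.ofReal ((b₀ - a₀) * (2⁻¹ : ℝ) ^ n) := by
      intro n
      rw [hA, Real.ediam_Icc]
      apply ENNReal.ofReal_le_ofReal
      have := (key (PiNat.res x n)).2.2.2
      rwa [PiNat.res_length] at this
    have hlim : Filter.Tendsto (fun n : ℕ => ENNReal.ofReal ((b₀ - a₀) * (2⁻¹ : ℝ) ^ n))
        Filter.atTop (nhds 0) := by
      have : Filter.Tendsto (fun n : ℕ => (b₀ - a₀) * (2⁻¹ : ℝ) ^ n) Filter.atTop (nhds 0) := by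
        have h0 : Filter.Tendsto (fun n : ℕ => ((2 : ℝ)⁻¹) ^ n) Filter.atTop (nhds 0) :=
          tendsto_pow_atTop_nhds_zero_of_lt_one (by norm_num) (by norm_num)
        simpa using h0.const_mul (b₀ - a₀)
      have := ENNReal.tendsto_ofReal this
      simpa using this
    exact tendsto_of_tendsto_of_tendsto_of_le_of_le tendsto_const_nhds hlim
      (fun n => zero_le) hbound
  have hca : CantorScheme.ClosureAntitone A := hanti.closureAntitone hclosed
  have hdom : (CantorScheme.inducedMap A).1 = Set.univ :=
    CantorScheme.ClosureAntitone.map_of_vanishingDiam hvd hca hnonempty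
  set h : (ℕ → Bool) → ℝ := fun x => (CantorScheme.inducedMap A).2 ⟨x, by rw [hdom]; trivial⟩
    with hh
  have hmem : ∀ (x : ℕ → Bool) (n : ℕ), h x ∈ A (PiNat.res x n) := fun x n =>
    CantorScheme.map_mem _ n
  have hcont : Continuous h :=
    (CantorScheme.VanishingDiam.map_continuous hvd).comp (Continuous.subtype_mk continuous_id _)
  have hinj : Function.Injective h := by
    intro x y hxy
    have := CantorScheme.Disjoint.map_injective hdisj hxy
    exact congrArg Subtype.val this
  refine ⟨Set.range h, (isCompact_range hcont).isClosed, ?_, ?_, ?_⟩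
  · intro hc
    have : Countable (Set.range h) := hc.to_subtype
    exact not_countable_funBool ((Function.Injective.countable
      (f := fun x => (⟨h x, Set.mem_range_self x⟩ : Set.range h))
      (fun x y hxy => hinj (congrArg Subtype.val hxy))))
  · rintro z ⟨x, rfl⟩
    have := hmem x 0
    rw [PiNat.res_zero] at this
    simp only [hA] at this
    rw [hgnil] at this
    rw [ha₀, hb₀] at this
    exact ⟨by linarith [this.1, hab], by linarith [this.2, hab]⟩
  · intro n z hz
    obtain ⟨x, rfl⟩ := hz
    have := hmem x (n + 1)
    rw [PiNat.res_succ] at this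
    have h2 := hsubU (x n) (PiNat.res x n) this
    rwa [PiNat.res_length] at h2
/-- If `B` is a Bernstein set and `V` is open in the Sorgenfrey plane with `(x,-x) ∈ V`
for all `x ∈ B`, then inside every nonempty interval `(c, d)` there are `k ≥ 1` and a
subinterval `(a, b)` such that `{x ∈ B : [x, x + 1/k) × [-x, -x + 1/k) ⊆ V} ∩ (a, b)`
is dense in `(a, b)` for the Euclidean topology, i.e. its Euclidean closure is `[a, b]`. -/
theorem bernstein_dense_uniform_square_in_subinterval (B : Set ℝ) (hB : IsBernstein B)
    (V : Set (ℝ × ℝ)) (hV : sorgenfreyPlane.IsOpen V)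
    (hBV : ∀ x ∈ B, ((x, -x) : ℝ × ℝ) ∈ V)
    (c d : ℝ) (hcd : c < d) :
    ∃ k : ℕ, 0 < k ∧ ∃ a b : ℝ, a < b ∧ Set.Ioo a b ⊆ Set.Ioo c d ∧
      closure ({x ∈ B | Set.Ico x (x + 1 / (k : ℝ)) ×ˢ Set.Ico (-x) (-x + 1 / (k : ℝ)) ⊆ V}
        ∩ Set.Ioo a b) = Set.Icc a b := by
  by_contra hcon
  push_neg at hcon
  set Bk : ℕ → Set ℝ := fun k =>
    {x ∈ B | Set.Ico x (x + 1 / (k : ℝ)) ×ˢ Set.Ico (-x) (-x + 1 / (k : ℝ)) ⊆ V} with hBk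
  -- every point of B is in some Bk (k+1)
  have hcover : ∀ x ∈ B, ∃ k : ℕ, x ∈ Bk (k + 1) := by
    intro x hxB
    obtain ⟨ε, hε, hsq⟩ := sorgenfrey_plane_nhds hV (hBV x hxB)
    obtain ⟨n, hn⟩ := exists_nat_one_div_lt hε
    refine ⟨n, hxB, fun q hq => ?_⟩
    apply hsq
    have hle : 1 / ((n : ℝ) + 1) ≤ ε := hn.le
    have hcast : ((n + 1 : ℕ) : ℝ) = (n : ℝ) + 1 := by push_cast; ring
    rw [hcast] at hq
    exact ⟨⟨hq.1.1, lt_of_lt_of_le hq.1.2 (by simp only []; linarith)⟩,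
      ⟨hq.2.1, lt_of_lt_of_le hq.2.2 (by simp only []; linarith)⟩⟩
  set a : ℝ := c + (d - c) / 3 with ha
  set b : ℝ := d - (d - c) / 3 with hb
  have hca : c < a := by rw [ha]; linarith
  have hab : a < b := by rw [ha, hb]; linarith
  have hbd : b < d := by rw [hb]; linarith
  set F : ℕ → Set ℝ := fun k => closure (Bk (k + 1) ∩ Set.Ioo c d) ∩ Set.Icc a b with hF
  have hFclosed : ∀ k, IsClosed (F k) := fun k => isClosed_closure.inter isClosed_Icc
  have hFint : ∀ k, interior (F k) = ∅ := by
    intro k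
    by_contra hne
    obtain ⟨y, hy⟩ := Set.nonempty_iff_ne_empty.2 hne
    obtain ⟨r, hr, hball⟩ := Metric.mem_nhds_iff.1 (mem_interior_iff_mem_nhds.1 hy)
    rw [Real.ball_eq_Ioo] at hball
    have hball' : Set.Ioo (y - r) (y + r) ⊆ F k := hball
    have huv : y - r < y + r := by linarith
    have hsub2 : Set.Ioo (y - r) (y + r) ⊆ Set.Ioo c d := by
      intro z hz
      have h2 := (hball' hz).2
      exact ⟨lt_of_lt_of_le hca h2.1, lt_of_le_of_lt h2.2 hbd⟩
    refine hcon (k + 1) (Nat.succ_pos k) (y - r) (y + r) huv hsub2 ?_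
    apply Set.Subset.antisymm
    · calc closure (Bk (k + 1) ∩ Set.Ioo (y - r) (y + r))
          ⊆ closure (Set.Ioo (y - r) (y + r)) := closure_mono Set.inter_subset_right
        _ = Set.Icc (y - r) (y + r) := closure_Ioo huv.ne
    · have step : Set.Ioo (y - r) (y + r) ⊆ closure (Bk (k + 1) ∩ Set.Ioo (y - r) (y + r)) := by
        intro z hz
        have hz1 : z ∈ closure (Bk (k + 1) ∩ Set.Ioo c d) := (hball' hz).1
        have hmem : z ∈ Set.Ioo (y - r) (y + r) ∩ closure (Bk (k + 1) ∩ Set.Ioo c d) := ⟨hz, hz1⟩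
        have h3 := isOpen_Ioo.inter_closure hmem
        refine closure_mono ?_ h3
        rintro w ⟨hw1, hw2, -⟩
        exact ⟨hw2, hw1⟩
      calc Set.Icc (y - r) (y + r) = closure (Set.Ioo (y - r) (y + r)) := (closure_Ioo huv.ne).symm
        _ ⊆ closure (closure (Bk (k + 1) ∩ Set.Ioo (y - r) (y + r))) := closure_mono step
        _ = closure (Bk (k + 1) ∩ Set.Ioo (y - r) (y + r)) := closure_closure
  obtain ⟨K, hKc, hKunc, hKsub, hKU⟩ := exists_closed_not_countable
    (fun k => (hFclosed k).isOpen_compl)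
    (fun k => interior_eq_empty_iff_dense_compl.1 (hFint k)) hab
  obtain ⟨⟨x, hxB, hxK⟩, -⟩ := hB K hKc hKunc
  obtain ⟨k, hk⟩ := hcover x hxB
  have hxIoo : x ∈ Set.Ioo a b := hKsub hxK
  have hxcd : x ∈ Set.Ioo c d := ⟨lt_trans hca hxIoo.1, lt_trans hxIoo.2 hbd⟩
  have hxF : x ∈ F k := ⟨subset_closure ⟨hk, hxcd⟩, ⟨hxIoo.1.le, hxIoo.2.le⟩⟩
  exact hKU k hxK hxF
end

section
/- Let n be a natural number, let B₁, …, B_{n+2} be pairwise disjoint subsets of ℝ with union ℝ, and define U₀ = {(x, y) : y < −x} and U_i = ⋃_{x ∈ B_i} [x, ∞) × [−x, ∞) for 1 ≤ i ≤ n + 2, viewed as subsets of the Sorgenfrey plane S × S. Let D = {(x, −x) : x ∈ ℝ} be the antidiagonal. Then: (i) U_i ⊆ {(x, y) : y ≥ −x} for every i ≥ 1, so U₀ is disjoint from every U_i with i ≥ 1; (ii) U_i ∩ D = {(x, −x) : x ∈ B_i} for every i ≥ 1; and (iii) every shrinking {V₀, V₁, …, V_{n+2}} of the cover {U₀, U₁,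 …, U_{n+2}} satisfies V₀ = U₀ and V_i ∩ D = {(x, −x) : x ∈ B_i} for every i ≥ 1. -/
/-- Combinatorial properties of the cover `U₀ = {(x,y) : y < -x}`,
`Uᵢ = ⋃_{x ∈ Bᵢ} [x,∞) × [-x,∞)` built from a partition `B₁, …, B_{n+2}` of `ℝ`:
(i) each `Uᵢ` (`i ≥ 1`) lies in `{(x,y) : -x ≤ y}` and is disjoint from `U₀`;
(ii) `Uᵢ ∩ D = {(x,-x) : x ∈ Bᵢ}` where `D` is the antidiagonal;
(iii) every shrinking `V₀, …, V_{n+2}` of this cover satisfies `V₀ = U₀` and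
`Vᵢ ∩ D = {(x,-x) : x ∈ Bᵢ}` for `i ≥ 1`. -/
theorem bernstein_cover_antidiagonal_trace (n : ℕ) (B : Fin (n + 2) → Set ℝ)
    (hdisj : Pairwise (Function.onFun Disjoint B))
    (hBcover : (⋃ i, B i) = Set.univ)
    (U : Fin (n + 3) → Set (ℝ × ℝ))
    (hU0 : U 0 = {p : ℝ × ℝ | p.2 < -p.1})
    (hUi : ∀ i : Fin (n + 2), U i.succ = ⋃ x ∈ B i, Set.Ici x ×ˢ Set.Ici (-x))
    (D : Set (ℝ × ℝ)) (hD : D = {p : ℝ × ℝ | ∃ x : ℝ, p = (x, -x)}) :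
    (∀ i : Fin (n + 2),
        U i.succ ⊆ {p : ℝ × ℝ | -p.1 ≤ p.2} ∧ Disjoint (U 0) (U i.succ)) ∧
    (∀ i : Fin (n + 2), U i.succ ∩ D = {p : ℝ × ℝ | ∃ x ∈ B i, p = (x, -x)}) ∧
    (∀ V : Fin (n + 3) → Set (ℝ × ℝ),
        (∀ i, V i ⊆ U i) → (⋃ i, V i) = Set.univ →
        V 0 = U 0 ∧
          ∀ i : Fin (n + 2), V i.succ ∩ D = {p : ℝ × ℝ | ∃ x ∈ B i, p = (x, -x)}) := by
  have hsub : ∀ i : Fin (n + 2), U i.succ ⊆ {p : ℝ × ℝ | -p.1 ≤ p.2} := by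
    intro i p hp
    rw [hUi i] at hp
    simp only [Set.mem_iUnion] at hp
    obtain ⟨x, hxB, hx1, hx2⟩ := hp
    simp only [Set.mem_Ici] at hx1 hx2
    exact le_trans (by linarith) hx2
  have hD2 : ∀ i : Fin (n + 2),
      U i.succ ∩ D = {p : ℝ × ℝ | ∃ x ∈ B i, p = (x, -x)} := by
    intro i
    ext p
    constructor
    · rintro ⟨hpU, hpD⟩
      rw [hD] at hpD
      obtain ⟨x0, rfl⟩ := hpD
      rw [hUi i] at hpU
      simp only [Set.mem_iUnion] at hpU
      obtain ⟨x, hxB, hx1, hx2⟩ := hpU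
      simp only [Set.mem_Ici] at hx1 hx2
      have : x = x0 := le_antisymm hx1 (by linarith)
      subst this
      exact ⟨x, hxB, rfl⟩
    · rintro ⟨x, hxB, rfl⟩
      refine ⟨?_, by rw [hD]; exact ⟨x, rfl⟩⟩
      rw [hUi i]
      simp only [Set.mem_iUnion]
      exact ⟨x, hxB, le_refl x, le_refl (-x)⟩
  refine ⟨fun i => ⟨hsub i, ?_⟩, hD2, ?_⟩
  · rw [Set.disjoint_left]
    intro p hp0 hpi
    rw [hU0] at hp0
    exact absurd (hsub i hpi) (by simpa using hp0)
  · intro V hVU hVcov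
    have hV0 : V 0 = U 0 := by
      refine le_antisymm (hVU 0) ?_
      intro p hp
      rw [hU0] at hp
      have : p ∈ ⋃ i, V i := hVcov ▸ Set.mem_univ p
      simp only [Set.mem_iUnion] at this
      obtain ⟨j, hj⟩ := this
      induction j using Fin.cases with
      | zero => exact hj
      | succ k =>
        exact absurd (hsub k (hVU _ hj)) (by simpa using hp)
    refine ⟨hV0, fun i => ?_⟩
    refine le_antisymm ?_ ?_
    · rw [← hD2 i]
      exact Set.inter_subset_inter_left D (hVU _)
    · rintro p ⟨x, hxB, rfl⟩
      have hmem : (x, -x) ∈ ⋃ j, V j := hVcov ▸ Set.mem_univ _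
      simp only [Set.mem_iUnion] at hmem
      obtain ⟨j, hj⟩ := hmem
      induction j using Fin.cases with
      | zero =>
        rw [hV0, hU0] at hj
        simp at hj
      | succ k =>
        have hmemD : (x, -x) ∈ D := by rw [hD]; exact ⟨x, rfl⟩
        have : (x, -x) ∈ U k.succ ∩ D := ⟨hVU _ hj, hmemD⟩
        rw [hD2 k] at this
        obtain ⟨x', hx'B, heq⟩ := this
        have hxx : x = x' := by
          have := congrArg Prod.fst heq; simpa using this
        subst hxx
        have hki : k = i := by
          by_contra hne
          exact Set.disjoint_left.mp (hdisj hne) hx'B hxB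
        subst hki
        exact ⟨hj, hmemD⟩
end
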